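/- arXiv:2012.10077 — 8 statements merged into one kernel-verified Lean document; each statement's English description precedes it below -/
import Mathlib

section
/- Consider 4 groups and 2 periods with outcomes Y_{g,t} ∈ ℝ. Define first treatments D^1: D^1_{g,1}=0 for all g, D^1_{2,2}=D^1_{4,2}=1, D^1_{1,2}=D^1_{3,2}=0; second treatments D^2: D^2_{g,1}=0 for all g, D^2_{3,2}=D^2_{4,2}=1, D^2_{1,2}=D^2_{2,2}=0. Then the coefficient β̂ on D^1 in the OLS regression of Y_{g,t} on group fixed effects, period fixed effects, D^1_{g,t} and D^2_{g,t} (with equal weights) satisfies β̂ = ½[(Y_{2,2}−Y_{2,1}) − (Y_{1,2}−Y_{1,1})] + ½[(Y_{4,2}−Y_{4,1}) − (Y_{3,2}−Y_{3,1})]. -/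
set_option maxHeartbeats 1000000

open Finset

lemma key2' (b : ℝ) (h : ∀ c : ℝ, 0 ≤ 2*c^2 + b*c) : b = 0 := by
  have h0 := h (-(b/4))
  have h1 : b^2 ≤ 0 := by nlinarith
  exact sq_eq_zero_iff.mp (le_antisymm h1 (sq_nonneg b))

lemma key4' (b : ℝ) (h : ∀ c : ℝ, 0 ≤ 4*c^2 + b*c) : b = 0 := by
  have h0 := h (-(b/8))
  have h1 : b^2 ≤ 0 := by nlinarith
  exact sq_eq_zero_iff.mp (le_antisymm h1 (sq_nonneg b))

/-- Four groups (indexed 0,1,2,3 for groups 1,2,3,4) and two periods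
(indexed 0,1 for periods 1,2). In period 2, groups 2 and 4 receive treatment 1
and groups 3 and 4 receive treatment 2. The OLS coefficient on `D¹` in the
regression of `Y` on group fixed effects, period fixed effects, `D¹` and `D²`
equals the average of the two difference-in-differences. -/
theorem twfe_two_periods_four_groups_decomposition
    (Y D1 D2 : Fin 4 → Fin 2 → ℝ)
    (hD1 : ∀ g t, D1 g t = if (g = 1 ∨ g = 3) ∧ t = 1 then 1 else 0)
    (hD2 : ∀ g t, D2 g t = if (g = 2 ∨ g = 3) ∧ t = 1 then 1 else 0)
    (α β δ : ℝ) (γ : Fin 4 → ℝ) (ν : Fin 2 → ℝ)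
    (hmin : ∀ (α' β' δ' : ℝ) (γ' : Fin 4 → ℝ) (ν' : Fin 2 → ℝ),
      ∑ g, ∑ t, (Y g t - α - γ g - ν t - β * D1 g t - δ * D2 g t) ^ 2 ≤
      ∑ g, ∑ t, (Y g t - α' - γ' g - ν' t - β' * D1 g t - δ' * D2 g t) ^ 2) :
    β = (1 / 2) * ((Y 1 1 - Y 1 0) - (Y 0 1 - Y 0 0))
      + (1 / 2) * ((Y 3 1 - Y 3 0) - (Y 2 1 - Y 2 0)) := by
  have E0 : -2*((Y 0 0 - α - γ 0 - ν 0) + (Y 0 1 - α - γ 0 - ν 1)) = 0 := by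
    apply key2'
    intro c
    have h := hmin α β δ (fun g => γ g + if g = 0 then c else 0) ν
    simp [Fin.sum_univ_four, Fin.sum_univ_two, hD1, hD2] at h
    nlinarith [h]
  have E1 : -2*((Y 1 0 - α - γ 1 - ν 0) + (Y 1 1 - α - γ 1 - ν 1 - β)) = 0 := by
    apply key2'
    intro c
    have h := hmin α β δ (fun g => γ g + if g = 1 then c else 0) ν
    simp [Fin.sum_univ_four, Fin.sum_univ_two, hD1, hD2] at h
    nlinarith [h]
  have E2 : -2*((Y 2 0 - α - γ 2 - ν 0) + (Y 2 1 - α - γ 2 - ν 1 - δ)) = 0 := by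
    apply key2'
    intro c
    have h := hmin α β δ (fun g => γ g + if g = 2 then c else 0) ν
    simp [Fin.sum_univ_four, Fin.sum_univ_two, hD1, hD2] at h
    nlinarith [h]
  have E3 : -2*((Y 3 0 - α - γ 3 - ν 0) + (Y 3 1 - α - γ 3 - ν 1 - β - δ)) = 0 := by
    apply key2'
    intro c
    have h := hmin α β δ (fun g => γ g + if g = 3 then c else 0) ν
    simp [Fin.sum_univ_four, Fin.sum_univ_two, hD1, hD2] at h
    nlinarith [h]
  have Eν : -2*((Y 0 1 - α - γ 0 - ν 1) + (Y 1 1 - α - γ 1 - ν 1 - β)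
      + (Y 2 1 - α - γ 2 - ν 1 - δ) + (Y 3 1 - α - γ 3 - ν 1 - β - δ)) = 0 := by
    apply key4'
    intro c
    have h := hmin α β δ γ (fun t => ν t + if t = 1 then c else 0)
    simp [Fin.sum_univ_four, Fin.sum_univ_two, hD1, hD2] at h
    ring_nf at h ⊢
    linarith [h]
  have Eβ : -2*((Y 1 1 - α - γ 1 - ν 1 - β) + (Y 3 1 - α - γ 3 - ν 1 - β - δ)) = 0 := by
    apply key2'
    intro c
    have h := hmin α (β + c) δ γ ν
    simp [Fin.sum_univ_four, Fin.sum_univ_two, hD1, hD2] at h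
    nlinarith [h]
  have Eδ : -2*((Y 2 1 - α - γ 2 - ν 1 - δ) + (Y 3 1 - α - γ 3 - ν 1 - β - δ)) = 0 := by
    apply key2'
    intro c
    have h := hmin α β (δ + c) γ ν
    simp [Fin.sum_univ_four, Fin.sum_univ_two, hD1, hD2] at h
    nlinarith [h]
  linarith [E0, E1, E2, E3, Eν, Eβ, Eδ]
end

section
/- Let G,T ≥ 2, with thresholds 1 < G^1 < G^2 ≤ G and 1 < T^1 < T^2 ≤ T, and define D^1_{g,t} = 1{g ≥ G^1}1{t ≥ T^1} and D^2_{g,t} = 1{g ≥ G^2}1{t ≥ T^2}. Suppose weights factor as N_{g,t} = A·a_g·b_t with a_g,b_t > 0, Σ_g a_g = Σ_t b_t = 1. Let p^k_G = Σ_g a_g 1{g ≥ G^k} and p^k_T = Σ_t b_t 1{t ≥ T^k}, k∈{1,2}. Then the residual of the weighted least squares regression of D^1_{g,t} on a constant, group dummies, time dummies, and D^2_{g,t} equals ε_{g,t} = (1{g≥G^1}−p^1_G)(1{t≥T^1}−p^1_T) − [(1−p^1_G)(1−p^1_T)/((1−p^2_G)(1−p^2_T))]·(1{g≥G^2}−p^2_G)(1{t≥T^2}−p^2_T).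 -/
open Finset

/-- In the standard DID design with two nested staggered treatments
`D¹_{g,t}=1{g≥G¹}1{t≥T¹}`, `D²_{g,t}=1{g≥G²}1{t≥T²}` and multiplicatively
separable weights `N_{g,t}=A·a_g·b_t`, the residual of the weighted least
squares regression of `D¹` on a constant, group dummies, time dummies and `D²`
has the stated closed form. -/
theorem residual_closed_form_nested_DID
    (G T G1 G2 T1 T2 : ℕ)
    (hG1 : 1 < G1) (hG12 : G1 < G2) (hG2 : G2 ≤ G)
    (hT1 : 1 < T1) (hT12 : T1 < T2) (hT2 : T2 ≤ T)
    (A : ℝ) (hA : 0 < A)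
    (a b : ℕ → ℝ)
    (ha : ∀ g ∈ Finset.Icc 1 G, 0 < a g) (hb : ∀ t ∈ Finset.Icc 1 T, 0 < b t)
    (hsa : ∑ g ∈ Finset.Icc 1 G, a g = 1) (hsb : ∑ t ∈ Finset.Icc 1 T, b t = 1)
    (N D1 D2 : ℕ → ℕ → ℝ)
    (hN : ∀ g t, N g t = A * a g * b t)
    (hD1 : ∀ g t, D1 g t =
      (if G1 ≤ g then (1 : ℝ) else 0) * (if T1 ≤ t then (1 : ℝ) else 0))
    (hD2 : ∀ g t, D2 g t =
      (if G2 ≤ g then (1 : ℝ) else 0) * (if T2 ≤ t then (1 : ℝ) else 0))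
    (p1G p2G p1T p2T : ℝ)
    (hp1G : p1G = ∑ g ∈ Finset.Icc 1 G, a g * (if G1 ≤ g then (1 : ℝ) else 0))
    (hp2G : p2G = ∑ g ∈ Finset.Icc 1 G, a g * (if G2 ≤ g then (1 : ℝ) else 0))
    (hp1T : p1T = ∑ t ∈ Finset.Icc 1 T, b t * (if T1 ≤ t then (1 : ℝ) else 0))
    (hp2T : p2T = ∑ t ∈ Finset.Icc 1 T, b t * (if T2 ≤ t then (1 : ℝ) else 0))
    (α ζ : ℝ) (γ ν : ℕ → ℝ)
    (hmin : ∀ (α' ζ' : ℝ) (γ' ν' : ℕ → ℝ),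
      ∑ g ∈ Finset.Icc 1 G, ∑ t ∈ Finset.Icc 1 T,
        N g t * (D1 g t - α - γ g - ν t - ζ * D2 g t) ^ 2 ≤
      ∑ g ∈ Finset.Icc 1 G, ∑ t ∈ Finset.Icc 1 T,
        N g t * (D1 g t - α' - γ' g - ν' t - ζ' * D2 g t) ^ 2) :
    ∀ g ∈ Finset.Icc 1 G, ∀ t ∈ Finset.Icc 1 T,
      D1 g t - α - γ g - ν t - ζ * D2 g t =
        ((if G1 ≤ g then (1 : ℝ) else 0) - p1G)
          * ((if T1 ≤ t then (1 : ℝ) else 0) - p1T)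
        - (1 - p1G) * (1 - p1T) / ((1 - p2G) * (1 - p2T))
          * (((if G2 ≤ g then (1 : ℝ) else 0) - p2G)
            * ((if T2 ≤ t then (1 : ℝ) else 0) - p2T)) := by
  have h1mem : (1 : ℕ) ∈ Finset.Icc 1 G := by
    simp only [Finset.mem_Icc]; omega
  have h1memT : (1 : ℕ) ∈ Finset.Icc 1 T := by
    simp only [Finset.mem_Icc]; omega
  -- p2G < 1 and p2T < 1
  have hp2Glt : p2G < 1 := by
    have hrw : ∑ g ∈ Finset.Icc 1 G, a g * (1 - if G2 ≤ g then (1:ℝ) else 0)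
        = 1 - p2G := by
      simp only [mul_sub, mul_one]
      rw [Finset.sum_sub_distrib, hsa, ← hp2G]
    have hle : a 1 * (1 - if G2 ≤ 1 then (1:ℝ) else 0)
        ≤ ∑ g ∈ Finset.Icc 1 G, a g * (1 - if G2 ≤ g then (1:ℝ) else 0) :=
      Finset.single_le_sum (f := fun i => a i * (1 - if G2 ≤ i then (1:ℝ) else 0))
        (fun i hi => by
          have h0 := (ha i hi).le; split_ifs <;> nlinarith) h1mem
    have h01 : (if G2 ≤ 1 then (1:ℝ) else 0) = 0 := if_neg (by omega)
    rw [h01, hrw] at hle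
    have := ha 1 h1mem
    linarith
  have hp2Tlt : p2T < 1 := by
    have hrw : ∑ t ∈ Finset.Icc 1 T, b t * (1 - if T2 ≤ t then (1:ℝ) else 0)
        = 1 - p2T := by
      simp only [mul_sub, mul_one]
      rw [Finset.sum_sub_distrib, hsb, ← hp2T]
    have hle : b 1 * (1 - if T2 ≤ 1 then (1:ℝ) else 0)
        ≤ ∑ t ∈ Finset.Icc 1 T, b t * (1 - if T2 ≤ t then (1:ℝ) else 0) :=
      Finset.single_le_sum (f := fun i => b i * (1 - if T2 ≤ i then (1:ℝ) else 0))
        (fun i hi => by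
          have h0 := (hb i hi).le; split_ifs <;> nlinarith) h1memT
    have h01 : (if T2 ≤ 1 then (1:ℝ) else 0) = 0 := if_neg (by omega)
    rw [h01, hrw] at hle
    have := hb 1 h1memT
    linarith
  have hden : (1 - p2G) * (1 - p2T) ≠ 0 :=
    ne_of_gt (mul_pos (by linarith) (by linarith))
  set Z : ℝ := (1 - p1G) * (1 - p1T) / ((1 - p2G) * (1 - p2T)) with hZ
  have hZden : Z * ((1 - p2G) * (1 - p2T)) = (1 - p1G) * (1 - p1T) :=
    div_mul_cancel₀ _ hden
  -- the claimed residual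
  set e : ℕ → ℕ → ℝ := fun g t =>
    ((if G1 ≤ g then (1 : ℝ) else 0) - p1G) * ((if T1 ≤ t then (1 : ℝ) else 0) - p1T)
      - Z * (((if G2 ≤ g then (1 : ℝ) else 0) - p2G)
            * ((if T2 ≤ t then (1 : ℝ) else 0) - p2T)) with hedef
  -- candidate coefficients
  set αs : ℝ := -p1G * p1T + Z * p2G * p2T with hαs
  set γs : ℕ → ℝ := fun g =>
    p1T * (if G1 ≤ g then (1 : ℝ) else 0) - Z * p2T * (if G2 ≤ g then (1 : ℝ) else 0)
    with hγs
  set νs : ℕ → ℝ := fun t =>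
    p1G * (if T1 ≤ t then (1 : ℝ) else 0) - Z * p2G * (if T2 ≤ t then (1 : ℝ) else 0)
    with hνs
  have F1 : ∀ g t, D1 g t - αs - γs g - νs t - Z * D2 g t = e g t := by
    intro g t
    simp only [hD1 g t, hD2 g t, hedef, hαs, hγs, hνs]
    ring
  -- centered-indicator sums vanish
  have hT1sum : ∑ t ∈ Finset.Icc 1 T, b t * ((if T1 ≤ t then (1:ℝ) else 0) - p1T) = 0 := by
    simp only [mul_sub]
    rw [Finset.sum_sub_distrib, ← hp1T, ← Finset.sum_mul, hsb, one_mul, sub_self]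
  have hT2sum : ∑ t ∈ Finset.Icc 1 T, b t * ((if T2 ≤ t then (1:ℝ) else 0) - p2T) = 0 := by
    simp only [mul_sub]
    rw [Finset.sum_sub_distrib, ← hp2T, ← Finset.sum_mul, hsb, one_mul, sub_self]
  have hG1sum : ∑ g ∈ Finset.Icc 1 G, a g * ((if G1 ≤ g then (1:ℝ) else 0) - p1G) = 0 := by
    simp only [mul_sub]
    rw [Finset.sum_sub_distrib, ← hp1G, ← Finset.sum_mul, hsa, one_mul, sub_self]
  have hG2sum : ∑ g ∈ Finset.Icc 1 G, a g * ((if G2 ≤ g then (1:ℝ) else 0) - p2G) = 0 := by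
    simp only [mul_sub]
    rw [Finset.sum_sub_distrib, ← hp2G, ← Finset.sum_mul, hsa, one_mul, sub_self]
  -- row and column orthogonality
  have O1 : ∀ g, ∑ t ∈ Finset.Icc 1 T, b t * e g t = 0 := by
    intro g
    have key : ∀ t, b t * e g t =
        ((if G1 ≤ g then (1:ℝ) else 0) - p1G)
          * (b t * ((if T1 ≤ t then (1:ℝ) else 0) - p1T))
        - (Z * ((if G2 ≤ g then (1:ℝ) else 0) - p2G))
          * (b t * ((if T2 ≤ t then (1:ℝ) else 0) - p2T)) := by
      intro t; simp only [hedef]; ring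
    rw [Finset.sum_congr rfl (fun t _ => key t), Finset.sum_sub_distrib,
      ← Finset.mul_sum, ← Finset.mul_sum, hT1sum, hT2sum, mul_zero, mul_zero, sub_self]
  have O2 : ∀ t, ∑ g ∈ Finset.Icc 1 G, a g * e g t = 0 := by
    intro t
    have key : ∀ g, a g * e g t =
        ((if T1 ≤ t then (1:ℝ) else 0) - p1T)
          * (a g * ((if G1 ≤ g then (1:ℝ) else 0) - p1G))
        - (Z * ((if T2 ≤ t then (1:ℝ) else 0) - p2T))
          * (a g * ((if G2 ≤ g then (1:ℝ) else 0) - p2G)) := by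
      intro g; simp only [hedef]; ring
    rw [Finset.sum_congr rfl (fun g _ => key g), Finset.sum_sub_distrib,
      ← Finset.mul_sum, ← Finset.mul_sum, hG1sum, hG2sum, mul_zero, mul_zero, sub_self]
  -- residual orthogonal to D2, pointwise thanks to nesting
  have eD2 : ∀ g t, e g t * D2 g t = 0 := by
    intro g t
    rw [hD2 g t]
    by_cases h2g : G2 ≤ g
    · by_cases h2t : T2 ≤ t
      · have h1g : G1 ≤ g := by omega
        have h1t : T1 ≤ t := by omega
        simp only [hedef, if_pos h2g, if_pos h2t, if_pos h1g, if_pos h1t]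
        linear_combination -hZden
      · simp [hedef, if_neg h2t]
    · simp [hedef, if_neg h2g]
  -- the correction term
  set H : ℕ → ℕ → ℝ := fun g t =>
    (αs - α) + (γs g - γ g) + (νs t - ν t) + (Z - ζ) * D2 g t with hH
  -- cross term vanishes
  have hcross : ∑ g ∈ Finset.Icc 1 G, ∑ t ∈ Finset.Icc 1 T,
      N g t * (e g t * H g t) = 0 := by
    have key : ∀ g ∈ Finset.Icc 1 G, ∑ t ∈ Finset.Icc 1 T, N g t * (e g t * H g t)
        = ∑ t ∈ Finset.Icc 1 T, (A * (b t * (νs t - ν t))) * (a g * e g t) := by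
      intro g hg
      have expand : ∀ t, N g t * (e g t * H g t)
          = (A * a g * ((αs - α) + (γs g - γ g))) * (b t * e g t)
            + (A * (b t * (νs t - ν t))) * (a g * e g t) := by
        intro t
        rw [hN g t]
        simp only [hH]
        linear_combination (A * a g * b t * (Z - ζ)) * eD2 g t
      rw [Finset.sum_congr rfl (fun t _ => expand t), Finset.sum_add_distrib,
        ← Finset.mul_sum, O1 g, mul_zero, zero_add]
    rw [Finset.sum_congr rfl key, Finset.sum_comm]
    refine Finset.sum_eq_zero (fun t ht => ?_)
    rw [← Finset.mul_sum, O2 t, mul_zero]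
  -- decomposition of the objective at the true minimizer
  have hdecomp : ∀ g t, N g t * (D1 g t - α - γ g - ν t - ζ * D2 g t) ^ 2
      = N g t * e g t ^ 2 + 2 * (N g t * (e g t * H g t)) + N g t * H g t ^ 2 := by
    intro g t
    rw [← F1 g t]
    simp only [hH]
    ring
  have hrhs : ∑ g ∈ Finset.Icc 1 G, ∑ t ∈ Finset.Icc 1 T,
      N g t * (D1 g t - αs - γs g - νs t - Z * D2 g t) ^ 2
      = ∑ g ∈ Finset.Icc 1 G, ∑ t ∈ Finset.Icc 1 T, N g t * e g t ^ 2 :=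
    Finset.sum_congr rfl (fun g _ => Finset.sum_congr rfl (fun t _ => by rw [F1 g t]))
  have hle := hmin αs Z γs νs
  rw [hrhs] at hle
  have hsplit : ∑ g ∈ Finset.Icc 1 G, ∑ t ∈ Finset.Icc 1 T,
      N g t * (D1 g t - α - γ g - ν t - ζ * D2 g t) ^ 2
      = (∑ g ∈ Finset.Icc 1 G, ∑ t ∈ Finset.Icc 1 T, N g t * e g t ^ 2)
        + 2 * (∑ g ∈ Finset.Icc 1 G, ∑ t ∈ Finset.Icc 1 T, N g t * (e g t * H g t))
        + ∑ g ∈ Finset.Icc 1 G, ∑ t ∈ Finset.Icc 1 T, N g t * H g t ^ 2 := by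
    simp only [hdecomp, Finset.sum_add_distrib, ← Finset.mul_sum]
  rw [hsplit, hcross, mul_zero, add_zero] at hle
  have hHsum : ∑ g ∈ Finset.Icc 1 G, ∑ t ∈ Finset.Icc 1 T, N g t * H g t ^ 2 ≤ 0 := by
    linarith
  have hnonneg : ∀ g ∈ Finset.Icc 1 G, ∀ t ∈ Finset.Icc 1 T,
      0 ≤ N g t * H g t ^ 2 := by
    intro g hg t ht
    have hNpos : 0 < N g t := by
      rw [hN g t]; exact mul_pos (mul_pos hA (ha g hg)) (hb t ht)
    exact mul_nonneg hNpos.le (sq_nonneg _)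
  have hHzero : ∑ g ∈ Finset.Icc 1 G, ∑ t ∈ Finset.Icc 1 T, N g t * H g t ^ 2 = 0 :=
    le_antisymm hHsum (Finset.sum_nonneg (fun g hg =>
      Finset.sum_nonneg (fun t ht => hnonneg g hg t ht)))
  intro g hg t ht
  have hrow : ∑ t ∈ Finset.Icc 1 T, N g t * H g t ^ 2 = 0 :=
    (Finset.sum_eq_zero_iff_of_nonneg (fun g' hg' =>
      Finset.sum_nonneg (fun t' ht' => hnonneg g' hg' t' ht'))).mp hHzero g hg
  have hterm : N g t * H g t ^ 2 = 0 :=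
    (Finset.sum_eq_zero_iff_of_nonneg (fun t' ht' => hnonneg g hg t' ht')).mp hrow t ht
  have hNpos : 0 < N g t := by
    rw [hN g t]; exact mul_pos (mul_pos hA (ha g hg)) (hb t ht)
  have hH0 : H g t = 0 := by
    rcases mul_eq_zero.mp hterm with h | h
    · exact absurd h (ne_of_gt hNpos)
    · exact pow_eq_zero_iff (two_ne_zero) |>.mp h
  have h1 := F1 g t
  simp only [hH] at hH0
  have hfin : D1 g t - α - γ g - ν t - ζ * D2 g t = e g t := by
    linear_combination h1 + hH0
  rw [hfin]
end

section
/- Under the standard DID design with two nested treatments and separable weights, if Σ_{g,t} N_{g,t} D^2_{g,t} > Σ_{g,t} N_{g,t} 1{g < G^2} 1{t < T^2}, then ε_{g,t} < 0 for all (g,t) with G^1 ≤ g ≤ G^2−1 and T^1 ≤ t ≤ T^2−1. -/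
open Finset

lemma sum_compl_ind (n K : ℕ) (x : ℕ → ℝ)
    (hs : ∑ i ∈ Finset.Icc 1 n, x i = 1) :
    ∑ i ∈ Finset.Icc 1 n, x i * (if i < K then 1 else 0) =
      1 - ∑ i ∈ Finset.Icc 1 n, x i * (if K ≤ i then 1 else 0) := by
  have key : ∑ i ∈ Finset.Icc 1 n, x i * (if i < K then 1 else 0)
      + ∑ i ∈ Finset.Icc 1 n, x i * (if K ≤ i then 1 else 0) = 1 := by
    rw [← Finset.sum_add_distrib]
    calc ∑ i ∈ Finset.Icc 1 n,
          (x i * (if i < K then (1:ℝ) else 0) + x i * (if K ≤ i then (1:ℝ) else 0))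
        = ∑ i ∈ Finset.Icc 1 n, x i := by
          apply Finset.sum_congr rfl
          intro i _
          split_ifs with h1 h2 h2 <;> first | omega | ring
      _ = 1 := hs
  linarith

lemma sum_ind_lt_pos (n K : ℕ) (x : ℕ → ℝ) (hn : 1 ≤ n) (hK : 1 < K)
    (hx : ∀ i ∈ Finset.Icc 1 n, 0 < x i) :
    0 < ∑ i ∈ Finset.Icc 1 n, x i * (if i < K then 1 else 0) := by
  apply Finset.sum_pos'
  · intro i hi
    have := (hx i hi).le
    split_ifs <;> nlinarith
  · refine ⟨1, Finset.mem_Icc.mpr ⟨le_refl 1, hn⟩, ?_⟩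
    rw [if_pos hK]
    simpa using hx 1 (Finset.mem_Icc.mpr ⟨le_refl 1, hn⟩)

set_option maxHeartbeats 1000000 in
/-- In the standard DID design with two nested treatments and
separable weights, if the total weight of cells receiving the second treatment
exceeds the total weight of cells with `g<G²` and `t<T²`, then the residual of
the weighted regression of `D¹` on group/time dummies and `D²` is strictly
negative on every cell with `G¹ ≤ g ≤ G²−1` and `T¹ ≤ t ≤ T²−1`. -/
theorem residual_negative_weights_nested_DID

    (G T G1 G2 T1 T2 : ℕ)
    (hG1 : 1 < G1) (hG12 : G1 < G2) (hG2 : G2 ≤ G)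
    (hT1 : 1 < T1) (hT12 : T1 < T2) (hT2 : T2 ≤ T)
    (A : ℝ) (hA : 0 < A)
    (a b : ℕ → ℝ)
    (ha : ∀ g ∈ Finset.Icc 1 G, 0 < a g) (hb : ∀ t ∈ Finset.Icc 1 T, 0 < b t)
    (hsa : ∑ g ∈ Finset.Icc 1 G, a g = 1) (hsb : ∑ t ∈ Finset.Icc 1 T, b t = 1)
    (N D1 D2 : ℕ → ℕ → ℝ)
    (hN : ∀ g t, N g t = A * a g * b t)
    (hD1 : ∀ g t, D1 g t =
      (if G1 ≤ g then (1 : ℝ) else 0) * (if T1 ≤ t then (1 : ℝ) else 0))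
    (hD2 : ∀ g t, D2 g t =
      (if G2 ≤ g then (1 : ℝ) else 0) * (if T2 ≤ t then (1 : ℝ) else 0))
    (p1G p2G p1T p2T : ℝ)
    (hp1G : p1G = ∑ g ∈ Finset.Icc 1 G, a g * (if G1 ≤ g then (1 : ℝ) else 0))
    (hp2G : p2G = ∑ g ∈ Finset.Icc 1 G, a g * (if G2 ≤ g then (1 : ℝ) else 0))
    (hp1T : p1T = ∑ t ∈ Finset.Icc 1 T, b t * (if T1 ≤ t then (1 : ℝ) else 0))
    (hp2T : p2T = ∑ t ∈ Finset.Icc 1 T, b t * (if T2 ≤ t then (1 : ℝ) else 0))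
    (α ζ : ℝ) (γ ν : ℕ → ℝ)
    (hmin : ∀ (α' ζ' : ℝ) (γ' ν' : ℕ → ℝ),
      ∑ g ∈ Finset.Icc 1 G, ∑ t ∈ Finset.Icc 1 T,
        N g t * (D1 g t - α - γ g - ν t - ζ * D2 g t) ^ 2 ≤
      ∑ g ∈ Finset.Icc 1 G, ∑ t ∈ Finset.Icc 1 T,
        N g t * (D1 g t - α' - γ' g - ν' t - ζ' * D2 g t) ^ 2)
    (hbig : ∑ g ∈ Finset.Icc 1 G, ∑ t ∈ Finset.Icc 1 T, N g t * D2 g t >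
      ∑ g ∈ Finset.Icc 1 G, ∑ t ∈ Finset.Icc 1 T,
        N g t * (if g < G2 then (1 : ℝ) else 0) * (if t < T2 then (1 : ℝ) else 0)) :
    ∀ g ∈ Finset.Icc 1 G, ∀ t ∈ Finset.Icc 1 T,
      G1 ≤ g → g ≤ G2 - 1 → T1 ≤ t → t ≤ T2 - 1 →
      D1 g t - α - γ g - ν t - ζ * D2 g t < 0 := by
  have hG : 1 ≤ G := by omega
  have hT : 1 ≤ T := by omega
  -- complements
  have c1G : ∑ g ∈ Finset.Icc 1 G, a g * (if g < G1 then (1:ℝ) else 0) = 1 - p1G := by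
    rw [hp1G]; exact sum_compl_ind G G1 a hsa
  have c2G : ∑ g ∈ Finset.Icc 1 G, a g * (if g < G2 then (1:ℝ) else 0) = 1 - p2G := by
    rw [hp2G]; exact sum_compl_ind G G2 a hsa
  have c1T : ∑ t ∈ Finset.Icc 1 T, b t * (if t < T1 then (1:ℝ) else 0) = 1 - p1T := by
    rw [hp1T]; exact sum_compl_ind T T1 b hsb
  have c2T : ∑ t ∈ Finset.Icc 1 T, b t * (if t < T2 then (1:ℝ) else 0) = 1 - p2T := by
    rw [hp2T]; exact sum_compl_ind T T2 b hsb
  -- positivity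
  have hp : 0 < 1 - p1G := c1G ▸ sum_ind_lt_pos G G1 a hG hG1 ha
  have hP : 0 < 1 - p2G := c2G ▸ sum_ind_lt_pos G G2 a hG (by omega) ha
  have hq : 0 < 1 - p1T := c1T ▸ sum_ind_lt_pos T T1 b hT hT1 hb
  have hQ : 0 < 1 - p2T := c2T ▸ sum_ind_lt_pos T T2 b hT (by omega) hb
  -- the explicit optimal coefficient on D2
  set Z : ℝ := ((1 - p1G) * (1 - p1T)) / ((1 - p2G) * (1 - p2T)) with hZdef
  have hZmul : Z * ((1 - p2G) * (1 - p2T)) = (1 - p1G) * (1 - p1T) := by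
    rw [hZdef]
    field_simp
  have hZpos : 0 < Z := div_pos (mul_pos hp hq) (mul_pos hP hQ)
  set αs : ℝ := -(p1G * p1T) + Z * (p2G * p2T) with hαs
  set γs : ℕ → ℝ := fun g =>
    p1T * (if G1 ≤ g then (1:ℝ) else 0) - Z * p2T * (if G2 ≤ g then (1:ℝ) else 0) with hγs
  set νs : ℕ → ℝ := fun t =>
    p1G * (if T1 ≤ t then (1:ℝ) else 0) - Z * p2G * (if T2 ≤ t then (1:ℝ) else 0) with hνs
  -- hbig in terms of p's
  have hbig' : (1 - p2G) * (1 - p2T) < p2G * p2T := by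
    have hL : ∑ g ∈ Finset.Icc 1 G, ∑ t ∈ Finset.Icc 1 T, N g t * D2 g t
        = A * (p2G * p2T) := by
      calc ∑ g ∈ Finset.Icc 1 G, ∑ t ∈ Finset.Icc 1 T, N g t * D2 g t
          = ∑ g ∈ Finset.Icc 1 G, ∑ t ∈ Finset.Icc 1 T,
              (A * (a g * (if G2 ≤ g then (1:ℝ) else 0))) *
              (b t * (if T2 ≤ t then (1:ℝ) else 0)) := by
            apply Finset.sum_congr rfl; intro g _
            apply Finset.sum_congr rfl; intro t _
            rw [hN, hD2]; ring
        _ = (∑ g ∈ Finset.Icc 1 G, A * (a g * (if G2 ≤ g then (1:ℝ) else 0))) *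
            (∑ t ∈ Finset.Icc 1 T, b t * (if T2 ≤ t then (1:ℝ) else 0)) :=
            (Finset.sum_mul_sum _ _ _ _).symm
        _ = A * (p2G * p2T) := by
            rw [← Finset.mul_sum, ← hp2G, ← hp2T]; ring
    have hR : ∑ g ∈ Finset.Icc 1 G, ∑ t ∈ Finset.Icc 1 T,
        N g t * (if g < G2 then (1:ℝ) else 0) * (if t < T2 then (1:ℝ) else 0)
        = A * ((1 - p2G) * (1 - p2T)) := by
      calc ∑ g ∈ Finset.Icc 1 G, ∑ t ∈ Finset.Icc 1 T,
              N g t * (if g < G2 then (1:ℝ) else 0) * (if t < T2 then (1:ℝ) else 0)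
          = ∑ g ∈ Finset.Icc 1 G, ∑ t ∈ Finset.Icc 1 T,
              (A * (a g * (if g < G2 then (1:ℝ) else 0))) *
              (b t * (if t < T2 then (1:ℝ) else 0)) := by
            apply Finset.sum_congr rfl; intro g _
            apply Finset.sum_congr rfl; intro t _
            rw [hN]; ring
        _ = (∑ g ∈ Finset.Icc 1 G, A * (a g * (if g < G2 then (1:ℝ) else 0))) *
            (∑ t ∈ Finset.Icc 1 T, b t * (if t < T2 then (1:ℝ) else 0)) :=
            (Finset.sum_mul_sum _ _ _ _).symm
        _ = A * ((1 - p2G) * (1 - p2T)) := by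
            rw [← Finset.mul_sum, c2G, c2T]; ring
    rw [hL, hR] at hbig
    exact (mul_lt_mul_iff_right₀ hA).mp hbig
  -- row orthogonality
  have hrow : ∀ g, ∑ t ∈ Finset.Icc 1 T,
      b t * (D1 g t - αs - γs g - νs t - Z * D2 g t) = 0 := by
    intro g
    have step : ∀ t ∈ Finset.Icc 1 T,
        b t * (D1 g t - αs - γs g - νs t - Z * D2 g t) =
        ((if G1 ≤ g then (1:ℝ) else 0) - p1G) * (b t * (if T1 ≤ t then (1:ℝ) else 0))
        + (Z * p2G - Z * (if G2 ≤ g then (1:ℝ) else 0)) *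
            (b t * (if T2 ≤ t then (1:ℝ) else 0))
        + (-αs - γs g) * b t := by
      intro t _
      simp only [hD1, hD2, hνs]
      ring
    rw [Finset.sum_congr rfl step, Finset.sum_add_distrib, Finset.sum_add_distrib,
        ← Finset.mul_sum, ← Finset.mul_sum, ← Finset.mul_sum, ← hp1T, ← hp2T, hsb]
    simp only [hαs, hγs]
    ring
  -- column orthogonality
  have hcol : ∀ t, ∑ g ∈ Finset.Icc 1 G,
      a g * (D1 g t - αs - γs g - νs t - Z * D2 g t) = 0 := by
    intro t
    have step : ∀ g ∈ Finset.Icc 1 G,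
        a g * (D1 g t - αs - γs g - νs t - Z * D2 g t) =
        ((if T1 ≤ t then (1:ℝ) else 0) - p1T) * (a g * (if G1 ≤ g then (1:ℝ) else 0))
        + (Z * p2T - Z * (if T2 ≤ t then (1:ℝ) else 0)) *
            (a g * (if G2 ≤ g then (1:ℝ) else 0))
        + (-αs - νs t) * a g := by
      intro g _
      simp only [hD1, hD2, hγs]
      ring
    rw [Finset.sum_congr rfl step, Finset.sum_add_distrib, Finset.sum_add_distrib,
        ← Finset.mul_sum, ← Finset.mul_sum, ← Finset.mul_sum, ← hp1G, ← hp2G, hsa]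
    simp only [hαs, hνs]
    ring
  -- D2 orthogonality
  have hortho2 : ∑ g ∈ Finset.Icc 1 G, ∑ t ∈ Finset.Icc 1 T,
      (a g * b t) * (D1 g t - αs - γs g - νs t - Z * D2 g t) * D2 g t = 0 := by
    apply Finset.sum_eq_zero; intro g _
    apply Finset.sum_eq_zero; intro t _
    rw [hD1, hD2]
    simp only [hγs, hνs]
    by_cases hg : G2 ≤ g
    · by_cases ht : T2 ≤ t
      · rw [if_pos hg, if_pos ht, if_pos (show G1 ≤ g by omega),
            if_pos (show T1 ≤ t by omega)]
        simp only [hαs]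
        linear_combination (-(a g * b t)) * hZmul
      · rw [if_neg ht]; ring
    · rw [if_neg hg]; ring
  -- quadratic expansion against hmin
  have hmin' := hmin αs Z γs νs
  have hcross : ∑ g ∈ Finset.Icc 1 G, ∑ t ∈ Finset.Icc 1 T,
      N g t * (D1 g t - αs - γs g - νs t - Z * D2 g t) *
      ((αs - α + (γs g - γ g)) + (νs t - ν t) + (Z - ζ) * D2 g t) = 0 := by
    have part1 : ∑ g ∈ Finset.Icc 1 G, ∑ t ∈ Finset.Icc 1 T,
        A * ((a g * (αs - α + (γs g - γ g))) *
          (b t * (D1 g t - αs - γs g - νs t - Z * D2 g t))) = 0 := by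
      apply Finset.sum_eq_zero; intro g _
      rw [← Finset.mul_sum, ← Finset.mul_sum, hrow g, mul_zero, mul_zero]
    have part2 : ∑ g ∈ Finset.Icc 1 G, ∑ t ∈ Finset.Icc 1 T,
        A * ((b t * (νs t - ν t)) *
          (a g * (D1 g t - αs - γs g - νs t - Z * D2 g t))) = 0 := by
      rw [Finset.sum_comm]
      apply Finset.sum_eq_zero; intro t _
      rw [← Finset.mul_sum, ← Finset.mul_sum, hcol t, mul_zero, mul_zero]
    have part3 : ∑ g ∈ Finset.Icc 1 G, ∑ t ∈ Finset.Icc 1 T,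
        (A * (Z - ζ)) *
          ((a g * b t) * (D1 g t - αs - γs g - νs t - Z * D2 g t) * D2 g t) = 0 := by
      simp only [← Finset.mul_sum]
      rw [hortho2, mul_zero]
    calc ∑ g ∈ Finset.Icc 1 G, ∑ t ∈ Finset.Icc 1 T,
          N g t * (D1 g t - αs - γs g - νs t - Z * D2 g t) *
          ((αs - α + (γs g - γ g)) + (νs t - ν t) + (Z - ζ) * D2 g t)
        = ∑ g ∈ Finset.Icc 1 G, ∑ t ∈ Finset.Icc 1 T,
          (A * ((a g * (αs - α + (γs g - γ g))) *
            (b t * (D1 g t - αs - γs g - νs t - Z * D2 g t)))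
          + A * ((b t * (νs t - ν t)) *
            (a g * (D1 g t - αs - γs g - νs t - Z * D2 g t)))
          + (A * (Z - ζ)) *
            ((a g * b t) * (D1 g t - αs - γs g - νs t - Z * D2 g t) * D2 g t)) := by
          apply Finset.sum_congr rfl; intro g _
          apply Finset.sum_congr rfl; intro t _
          rw [hN]; ring
      _ = 0 := by
          simp only [Finset.sum_add_distrib]
          rw [part1, part2, part3]; ring
  have hquad : ∑ g ∈ Finset.Icc 1 G, ∑ t ∈ Finset.Icc 1 T,
      N g t * ((αs - α + (γs g - γ g)) + (νs t - ν t) + (Z - ζ) * D2 g t) ^ 2 ≤ 0 := by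
    have e1 : ∑ g ∈ Finset.Icc 1 G, ∑ t ∈ Finset.Icc 1 T,
        N g t * (D1 g t - α - γ g - ν t - ζ * D2 g t) ^ 2
        = ∑ g ∈ Finset.Icc 1 G, ∑ t ∈ Finset.Icc 1 T,
            N g t * (D1 g t - αs - γs g - νs t - Z * D2 g t) ^ 2
          + (∑ g ∈ Finset.Icc 1 G, ∑ t ∈ Finset.Icc 1 T,
              N g t * (D1 g t - αs - γs g - νs t - Z * D2 g t) *
              ((αs - α + (γs g - γ g)) + (νs t - ν t) + (Z - ζ) * D2 g t)) * 2
          + ∑ g ∈ Finset.Icc 1 G, ∑ t ∈ Finset.Icc 1 T,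
              N g t * ((αs - α + (γs g - γ g)) + (νs t - ν t) + (Z - ζ) * D2 g t) ^ 2 := by
      calc ∑ g ∈ Finset.Icc 1 G, ∑ t ∈ Finset.Icc 1 T,
            N g t * (D1 g t - α - γ g - ν t - ζ * D2 g t) ^ 2
          = ∑ g ∈ Finset.Icc 1 G, ∑ t ∈ Finset.Icc 1 T,
            (N g t * (D1 g t - αs - γs g - νs t - Z * D2 g t) ^ 2
            + (N g t * (D1 g t - αs - γs g - νs t - Z * D2 g t) *
                ((αs - α + (γs g - γ g)) + (νs t - ν t) + (Z - ζ) * D2 g t)) * 2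
            + N g t * ((αs - α + (γs g - γ g)) + (νs t - ν t) + (Z - ζ) * D2 g t) ^ 2) := by
            apply Finset.sum_congr rfl; intro g _
            apply Finset.sum_congr rfl; intro t _
            ring
        _ = _ := by
            simp only [Finset.sum_add_distrib, ← Finset.sum_mul]
    rw [e1, hcross] at hmin'
    linarith
  -- conclude at the target cell
  intro g hg t ht hg1 hg2 ht1 ht2
  have hNpos : 0 < N g t := by
    rw [hN]; exact mul_pos (mul_pos hA (ha g hg)) (hb t ht)
  have hcell : N g t * ((αs - α + (γs g - γ g)) + (νs t - ν t) + (Z - ζ) * D2 g t) ^ 2 ≤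
      ∑ g ∈ Finset.Icc 1 G, ∑ t ∈ Finset.Icc 1 T,
        N g t * ((αs - α + (γs g - γ g)) + (νs t - ν t) + (Z - ζ) * D2 g t) ^ 2 := by
    have inner : ∀ g' ∈ Finset.Icc 1 G,
        (0:ℝ) ≤ ∑ t ∈ Finset.Icc 1 T,
          N g' t * ((αs - α + (γs g' - γ g')) + (νs t - ν t) + (Z - ζ) * D2 g' t) ^ 2 := by
      intro g' hg'
      apply Finset.sum_nonneg; intro t' ht'
      have : 0 < N g' t' := by
        rw [hN]; exact mul_pos (mul_pos hA (ha g' hg')) (hb t' ht')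
      positivity
    calc N g t * ((αs - α + (γs g - γ g)) + (νs t - ν t) + (Z - ζ) * D2 g t) ^ 2
        ≤ ∑ t' ∈ Finset.Icc 1 T,
            N g t' * ((αs - α + (γs g - γ g)) + (νs t' - ν t') + (Z - ζ) * D2 g t') ^ 2 := by
          apply Finset.single_le_sum (f := fun t' =>
            N g t' * ((αs - α + (γs g - γ g)) + (νs t' - ν t') + (Z - ζ) * D2 g t') ^ 2)
            (fun t' ht' => by
              have : 0 < N g t' := by
                rw [hN]; exact mul_pos (mul_pos hA (ha g hg)) (hb t' ht')
              positivity) ht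
      _ ≤ _ := by
          apply Finset.single_le_sum (f := fun g' =>
            ∑ t' ∈ Finset.Icc 1 T,
              N g' t' * ((αs - α + (γs g' - γ g')) + (νs t' - ν t') + (Z - ζ) * D2 g' t') ^ 2)
            inner hg
  have hd0 : (αs - α + (γs g - γ g)) + (νs t - ν t) + (Z - ζ) * D2 g t = 0 := by
    have h1 : N g t * ((αs - α + (γs g - γ g)) + (νs t - ν t) + (Z - ζ) * D2 g t) ^ 2 ≤ 0 :=
      le_trans hcell hquad
    have h2 : 0 ≤ N g t * ((αs - α + (γs g - γ g)) + (νs t - ν t) + (Z - ζ) * D2 g t) ^ 2 :=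
      mul_nonneg hNpos.le (sq_nonneg _)
    have h3 : N g t * ((αs - α + (γs g - γ g)) + (νs t - ν t) + (Z - ζ) * D2 g t) ^ 2 = 0 :=
      le_antisymm h1 h2
    have h4 := (mul_eq_zero.mp h3).resolve_left (ne_of_gt hNpos)
    exact pow_eq_zero_iff two_ne_zero |>.mp h4
  -- residual equals the star residual
  have heq : D1 g t - α - γ g - ν t - ζ * D2 g t
      = D1 g t - αs - γs g - νs t - Z * D2 g t := by
    linarith [hd0]
  rw [heq, hD1, hD2, if_pos hg1, if_pos ht1,
      if_neg (show ¬ G2 ≤ g by omega), if_neg (show ¬ T2 ≤ t by omega)]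
  simp only [hγs, hνs, hαs]
  rw [if_pos hg1, if_pos ht1, if_neg (show ¬ G2 ≤ g by omega),
      if_neg (show ¬ T2 ≤ t by omega)]
  have h1 : Z * ((1 - p2G) * (1 - p2T)) < Z * (p2G * p2T) :=
    mul_lt_mul_of_pos_left hbig' hZpos
  rw [hZmul] at h1
  nlinarith [h1]
end

section
/- In the standard DID design with two nested treatments and separable weights, the coefficient ζ on D^2 in the weighted least squares regression of D^1 on a constant, group dummies, time dummies, and D^2 equals ζ = (1−p^1_G)(1−p^1_T)/((1−p^2_G)(1−p^2_T)). -/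
open Finset

/-- Double sums of separable terms with product weights factor into a product
of two single sums. -/
lemma sep_sum (s u : Finset ℕ) (A : ℝ) (a b F H : ℕ → ℝ) :
    ∑ g ∈ s, ∑ t ∈ u, (A * a g * b t) * (F g * H t)
      = A * ((∑ g ∈ s, a g * F g) * (∑ t ∈ u, b t * H t)) := by
  have h1 : ∀ g, ∑ t ∈ u, (A * a g * b t) * (F g * H t)
      = (A * (a g * F g)) * ∑ t ∈ u, b t * H t := by
    intro g
    rw [Finset.mul_sum]
    exact Finset.sum_congr rfl fun t _ => by ring
  simp_rw [h1]
  rw [← Finset.sum_mul, ← Finset.mul_sum]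
  ring

set_option maxHeartbeats 2000000 in
/-- In the standard DID design with two nested treatments and
separable weights, the coefficient `ζ` on `D²` in the weighted least squares
regression of `D¹` on a constant, group dummies, time dummies and `D²` equals
`(1−p¹_G)(1−p¹_T)/((1−p²_G)(1−p²_T))`. -/
theorem coefficient_on_second_treatment_nested_DID

    (G T G1 G2 T1 T2 : ℕ)
    (hG1 : 1 < G1) (hG12 : G1 < G2) (hG2 : G2 ≤ G)
    (hT1 : 1 < T1) (hT12 : T1 < T2) (hT2 : T2 ≤ T)
    (A : ℝ) (hA : 0 < A)
    (a b : ℕ → ℝ)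
    (ha : ∀ g ∈ Finset.Icc 1 G, 0 < a g) (hb : ∀ t ∈ Finset.Icc 1 T, 0 < b t)
    (hsa : ∑ g ∈ Finset.Icc 1 G, a g = 1) (hsb : ∑ t ∈ Finset.Icc 1 T, b t = 1)
    (N D1 D2 : ℕ → ℕ → ℝ)
    (hN : ∀ g t, N g t = A * a g * b t)
    (hD1 : ∀ g t, D1 g t =
      (if G1 ≤ g then (1 : ℝ) else 0) * (if T1 ≤ t then (1 : ℝ) else 0))
    (hD2 : ∀ g t, D2 g t =
      (if G2 ≤ g then (1 : ℝ) else 0) * (if T2 ≤ t then (1 : ℝ) else 0))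
    (p1G p2G p1T p2T : ℝ)
    (hp1G : p1G = ∑ g ∈ Finset.Icc 1 G, a g * (if G1 ≤ g then (1 : ℝ) else 0))
    (hp2G : p2G = ∑ g ∈ Finset.Icc 1 G, a g * (if G2 ≤ g then (1 : ℝ) else 0))
    (hp1T : p1T = ∑ t ∈ Finset.Icc 1 T, b t * (if T1 ≤ t then (1 : ℝ) else 0))
    (hp2T : p2T = ∑ t ∈ Finset.Icc 1 T, b t * (if T2 ≤ t then (1 : ℝ) else 0))
    (α ζ : ℝ) (γ ν : ℕ → ℝ)
    (hmin : ∀ (α' ζ' : ℝ) (γ' ν' : ℕ → ℝ),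
      ∑ g ∈ Finset.Icc 1 G, ∑ t ∈ Finset.Icc 1 T,
        N g t * (D1 g t - α - γ g - ν t - ζ * D2 g t) ^ 2 ≤
      ∑ g ∈ Finset.Icc 1 G, ∑ t ∈ Finset.Icc 1 T,
        N g t * (D1 g t - α' - γ' g - ν' t - ζ' * D2 g t) ^ 2) :
    ζ = (1 - p1G) * (1 - p1T) / ((1 - p2G) * (1 - p2T)) := by
  classical
  set f1 : ℕ → ℝ := fun g => if G1 ≤ g then 1 else 0 with hf1def
  set f2 : ℕ → ℝ := fun g => if G2 ≤ g then 1 else 0 with hf2def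
  set h1 : ℕ → ℝ := fun t => if T1 ≤ t then 1 else 0 with hh1def
  set h2 : ℕ → ℝ := fun t => if T2 ≤ t then 1 else 0 with hh2def
  -- pointwise identities
  have hf1f2 : ∀ g, f1 g * f2 g = f2 g := by
    intro g; by_cases h : G2 ≤ g
    · have h' : G1 ≤ g := le_trans hG12.le h
      simp [f1, f2, h, h']
    · simp [f2, h]
  have hf2f2 : ∀ g, f2 g * f2 g = f2 g := by
    intro g; by_cases h : G2 ≤ g <;> simp [f2, h]
  have hh1h2 : ∀ t, h1 t * h2 t = h2 t := by
    intro t; by_cases h : T2 ≤ t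
    · have h' : T1 ≤ t := le_trans hT12.le h
      simp [h1, h2, h, h']
    · simp [h2, h]
  have hh2h2 : ∀ t, h2 t * h2 t = h2 t := by
    intro t; by_cases h : T2 ≤ t <;> simp [h2, h]
  -- key single-sum values
  have hSf2 : ∑ g ∈ Finset.Icc 1 G, a g * f2 g = p2G := hp2G.symm
  have hSh2 : ∑ t ∈ Finset.Icc 1 T, b t * h2 t = p2T := hp2T.symm
  have hMeg : ∑ g ∈ Finset.Icc 1 G, a g * (f2 g - p2G) = 0 := by
    simp_rw [mul_sub]
    rw [Finset.sum_sub_distrib, hSf2, ← Finset.sum_mul, hsa]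
    ring
  have hMet : ∑ t ∈ Finset.Icc 1 T, b t * (h2 t - p2T) = 0 := by
    simp_rw [mul_sub]
    rw [Finset.sum_sub_distrib, hSh2, ← Finset.sum_mul, hsb]
    ring
  have hMf1 : ∑ g ∈ Finset.Icc 1 G, a g * (f1 g * (f2 g - p2G))
      = p2G - p1G * p2G := by
    have h : ∀ g, a g * (f1 g * (f2 g - p2G))
        = a g * f2 g - (a g * f1 g) * p2G := by
      intro g
      linear_combination a g * hf1f2 g
    simp_rw [h]
    rw [Finset.sum_sub_distrib, hSf2, ← Finset.sum_mul, ← hp1G]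
  have hMh1 : ∑ t ∈ Finset.Icc 1 T, b t * (h1 t * (h2 t - p2T))
      = p2T - p1T * p2T := by
    have h : ∀ t, b t * (h1 t * (h2 t - p2T))
        = b t * h2 t - (b t * h1 t) * p2T := by
      intro t
      linear_combination b t * hh1h2 t
    simp_rw [h]
    rw [Finset.sum_sub_distrib, hSh2, ← Finset.sum_mul, ← hp1T]
  have hMf2 : ∑ g ∈ Finset.Icc 1 G, a g * (f2 g * (f2 g - p2G))
      = p2G - p2G * p2G := by
    have h : ∀ g, a g * (f2 g * (f2 g - p2G))
        = a g * f2 g - (a g * f2 g) * p2G := by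
      intro g
      linear_combination a g * hf2f2 g
    simp_rw [h]
    rw [Finset.sum_sub_distrib, hSf2, ← Finset.sum_mul, hSf2]
  have hMh2 : ∑ t ∈ Finset.Icc 1 T, b t * (h2 t * (h2 t - p2T))
      = p2T - p2T * p2T := by
    have h : ∀ t, b t * (h2 t * (h2 t - p2T))
        = b t * h2 t - (b t * h2 t) * p2T := by
      intro t
      linear_combination b t * hh2h2 t
    simp_rw [h]
    rw [Finset.sum_sub_distrib, hSh2, ← Finset.sum_mul, hSh2]
  have hMeg2 : ∑ g ∈ Finset.Icc 1 G, a g * ((f2 g - p2G) * (f2 g - p2G))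
      = p2G - p2G * p2G := by
    have h : ∀ g, a g * ((f2 g - p2G) * (f2 g - p2G))
        = a g * (f2 g * (f2 g - p2G)) - (a g * (f2 g - p2G)) * p2G := by
      intro g; ring
    simp_rw [h]
    rw [Finset.sum_sub_distrib, hMf2, ← Finset.sum_mul, hMeg]
    ring
  have hMet2 : ∑ t ∈ Finset.Icc 1 T, b t * ((h2 t - p2T) * (h2 t - p2T))
      = p2T - p2T * p2T := by
    have h : ∀ t, b t * ((h2 t - p2T) * (h2 t - p2T))
        = b t * (h2 t * (h2 t - p2T)) - (b t * (h2 t - p2T)) * p2T := by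
      intro t; ring
    simp_rw [h]
    rw [Finset.sum_sub_distrib, hMh2, ← Finset.sum_mul, hMet]
    ring
  -- positivity facts
  have hp2Gpos : 0 < p2G := by
    rw [hp2G]
    apply Finset.sum_pos' ?_ ⟨G2, by simp [Finset.mem_Icc]; omega, ?_⟩
    · intro g hg
      by_cases h : G2 ≤ g
      · simp only [h, if_pos]
        exact le_of_lt (by simpa using (ha g hg))
      · simp [h]
    · have : G2 ∈ Finset.Icc 1 G := by simp [Finset.mem_Icc]; omega
      simpa using ha G2 this
  have hp2Glt : p2G < 1 := by
    have h1G : (1 : ℕ) ∈ Finset.Icc 1 G := by simp [Finset.mem_Icc]; omega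
    have key : p2G + a 1 ≤ ∑ g ∈ Finset.Icc 1 G, a g := by
      rw [hp2G]
      rw [← Finset.sum_erase_add _ _ h1G, ← Finset.sum_erase_add _ a h1G]
      have h0 : a 1 * (if G2 ≤ 1 then (1 : ℝ) else 0) = 0 := by
        have : ¬ (G2 ≤ 1) := by omega
        simp [this]
      rw [h0]
      have : ∑ g ∈ (Finset.Icc 1 G).erase 1, a g * (if G2 ≤ g then (1 : ℝ) else 0)
          ≤ ∑ g ∈ (Finset.Icc 1 G).erase 1, a g := by
        apply Finset.sum_le_sum
        intro g hg
        have hag := ha g (Finset.mem_of_mem_erase hg)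
        by_cases h : G2 ≤ g <;> simp [h] <;> positivity
      linarith
    rw [hsa] at key
    have ha1 := ha 1 h1G
    linarith
  have hp2Tpos : 0 < p2T := by
    rw [hp2T]
    apply Finset.sum_pos' ?_ ⟨T2, by simp [Finset.mem_Icc]; omega, ?_⟩
    · intro t ht
      by_cases h : T2 ≤ t
      · simp only [h, if_pos]
        exact le_of_lt (by simpa using (hb t ht))
      · simp [h]
    · have : T2 ∈ Finset.Icc 1 T := by simp [Finset.mem_Icc]; omega
      simpa using hb T2 this
  have hp2Tlt : p2T < 1 := by
    have h1T : (1 : ℕ) ∈ Finset.Icc 1 T := by simp [Finset.mem_Icc]; omega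
    have key : p2T + b 1 ≤ ∑ t ∈ Finset.Icc 1 T, b t := by
      rw [hp2T]
      rw [← Finset.sum_erase_add _ _ h1T, ← Finset.sum_erase_add _ b h1T]
      have h0 : b 1 * (if T2 ≤ 1 then (1 : ℝ) else 0) = 0 := by
        have : ¬ (T2 ≤ 1) := by omega
        simp [this]
      rw [h0]
      have : ∑ t ∈ (Finset.Icc 1 T).erase 1, b t * (if T2 ≤ t then (1 : ℝ) else 0)
          ≤ ∑ t ∈ (Finset.Icc 1 T).erase 1, b t := by
        apply Finset.sum_le_sum
        intro t ht
        have hbt := hb t (Finset.mem_of_mem_erase ht)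
        by_cases h : T2 ≤ t <;> simp [h] <;> positivity
      linarith
    rw [hsb] at key
    have hb1 := hb 1 h1T
    linarith
  -- the residualized regressor and the quadratic expansion
  set C : ℝ := ∑ g ∈ Finset.Icc 1 G, ∑ t ∈ Finset.Icc 1 T,
      N g t * ((D1 g t - α - γ g - ν t - ζ * D2 g t) *
        ((f2 g - p2G) * (h2 t - p2T))) with hCdef
  set B : ℝ := A * ((p2G - p2G * p2G) * (p2T - p2T * p2T)) with hBdef
  have hBpos : 0 < B := by
    have h1 : 0 < p2G - p2G * p2G := by nlinarith
    have h2 : 0 < p2T - p2T * p2T := by nlinarith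
    rw [hBdef]; positivity
  -- sum of N * ε²
  have hBeps : ∑ g ∈ Finset.Icc 1 G, ∑ t ∈ Finset.Icc 1 T,
      (A * a g * b t) * (((f2 g - p2G) * (f2 g - p2G)) *
        ((h2 t - p2T) * (h2 t - p2T))) = B := by
    rw [sep_sum, hMeg2, hMet2]
  -- first-order condition: C = 0
  have hC0 : C = 0 := by
    have key : ∀ s : ℝ, 0 ≤ -2 * s * C + s ^ 2 * B := by
      intro s
      have h := hmin (α + s * (p2G * p2T)) (ζ + s)
        (fun g => γ g - s * (p2T * f2 g)) (fun t => ν t - s * (p2G * h2 t))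
      have hexp : ∑ g ∈ Finset.Icc 1 G, ∑ t ∈ Finset.Icc 1 T,
          N g t * (D1 g t - (α + s * (p2G * p2T)) - (γ g - s * (p2T * f2 g))
            - (ν t - s * (p2G * h2 t)) - (ζ + s) * D2 g t) ^ 2
          = (∑ g ∈ Finset.Icc 1 G, ∑ t ∈ Finset.Icc 1 T,
              N g t * (D1 g t - α - γ g - ν t - ζ * D2 g t) ^ 2)
            - 2 * s * C + s ^ 2 * B := by
        have hterm : ∀ g t,
            N g t * (D1 g t - (α + s * (p2G * p2T)) - (γ g - s * (p2T * f2 g))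
              - (ν t - s * (p2G * h2 t)) - (ζ + s) * D2 g t) ^ 2
            = N g t * (D1 g t - α - γ g - ν t - ζ * D2 g t) ^ 2
              - 2 * s * (N g t * ((D1 g t - α - γ g - ν t - ζ * D2 g t) *
                  ((f2 g - p2G) * (h2 t - p2T))))
              + s ^ 2 * ((A * a g * b t) * (((f2 g - p2G) * (f2 g - p2G)) *
                  ((h2 t - p2T) * (h2 t - p2T)))) := by
          intro g t
          have hD2' : D2 g t = f2 g * h2 t := hD2 g t
          rw [hN, hD2']
          ring
        simp_rw [hterm, Finset.sum_add_distrib, Finset.sum_sub_distrib,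
          ← Finset.mul_sum]
        rw [hBeps, ← hCdef]
      rw [hexp] at h
      linarith
    have h1 := key (C / B)
    have hB' : B ≠ 0 := ne_of_gt hBpos
    have h2 : 0 ≤ - C ^ 2 / B := by
      have : -2 * (C / B) * C + (C / B) ^ 2 * B = - C ^ 2 / B := by
        field_simp; ring
      linarith [this ▸ h1]
    have h3 : C ^ 2 ≤ 0 := by
      by_contra hcon
      push_neg at hcon
      have : - C ^ 2 / B < 0 := div_neg_of_neg_of_pos (by linarith) hBpos
      linarith
    nlinarith [sq_nonneg C]
  -- expand C using separability
  have hCval : C = A * ((p2G - p1G * p2G) * (p2T - p1T * p2T)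
      - ζ * ((p2G - p2G * p2G) * (p2T - p2T * p2T))) := by
    have hterm : ∀ g t,
        N g t * ((D1 g t - α - γ g - ν t - ζ * D2 g t) *
          ((f2 g - p2G) * (h2 t - p2T)))
        = (A * a g * b t) * ((f1 g * (f2 g - p2G)) * (h1 t * (h2 t - p2T)))
          + (A * a g * b t) * (((-(α + γ g)) * (f2 g - p2G)) * (h2 t - p2T))
          + (A * a g * b t) * ((f2 g - p2G) * ((-(ν t)) * (h2 t - p2T)))
          + (A * a g * b t) * (((-ζ) * (f2 g * (f2 g - p2G))) *
              (h2 t * (h2 t - p2T))) := by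
      intro g t
      rw [hN, hD1, hD2]
      show A * a g * b t * ((f1 g * h1 t - α - γ g - ν t - ζ * (f2 g * h2 t)) *
          ((f2 g - p2G) * (h2 t - p2T))) = _
      ring
    rw [hCdef]
    simp_rw [hterm, Finset.sum_add_distrib]
    rw [sep_sum, sep_sum, sep_sum, sep_sum]
    rw [hMf1, hMh1, hMeg, hMet]
    have e1 : ∑ g ∈ Finset.Icc 1 G, a g * ((-ζ) * (f2 g * (f2 g - p2G)))
        = (-ζ) * (p2G - p2G * p2G) := by
      rw [← hMf2, Finset.mul_sum]
      exact Finset.sum_congr rfl fun g _ => by ring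
    rw [e1, hMh2]
    ring
  -- solve for ζ
  rw [hCval] at hC0
  have hA' : A ≠ 0 := ne_of_gt hA
  have h2G : (1 : ℝ) - p2G ≠ 0 := by linarith
  have h2T : (1 : ℝ) - p2T ≠ 0 := by linarith
  have hkey : ζ * ((p2G - p2G * p2G) * (p2T - p2T * p2T))
      = (p2G - p1G * p2G) * (p2T - p1T * p2T) := by
    have := mul_eq_zero.mp hC0
    rcases this with h | h
    · exact absurd h hA'
    · linarith
  have hp2G' : p2G ≠ 0 := ne_of_gt hp2Gpos
  have hp2T' : p2T ≠ 0 := ne_of_gt hp2Tpos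
  field_simp
  nlinarith [hkey, mul_pos hp2Gpos hp2Tpos]
end

section
/- Let Y_{g,t}, D^1_{g,t}, D^{-1}_{g,t} be random variables on a probability space, g∈{1,...,G}, t∈{1,...,T}, with potential outcomes Y_{g,t}(d¹,d⁻¹) satisfying Y_{g,t} = Y_{g,t}(D^1_{g,t}, D^{-1}_{g,t}). Define Δ^1_{g,t} = Y_{g,t}(1,D^{-1}_{g,t}) − Y_{g,t}(0,D^{-1}_{g,t}) and Δ^{-1}_{g,t} = Y_{g,t}(0,D^{-1}_{g,t}) − Y_{g,t}(0,0). Suppose: (i) the per-group vectors of potential outcomes and treatments are mutually independent across g; (ii) for all g, t≥2, E[Y_{g,t}(0,0) − Y_{g,t−1}(0,0) | D_{g,1},...,D_{g,T}] = E[Y_{g,t}(0,0) − Y_{g,t−1}(0,0)]; (iii) E[Y_{g,t}(0,0) − Y_{g,t−1}(0,0)] does not vary across g. Then for all (g,g',t,t'), E[Y_{g,t}|𝐃] − E[Y_{g,t'}|𝐃] − (E[Y_{g',t}|𝐃] − E[Y_{g',t'}|𝐃]) = Σ over the four cells (with signs +,−,−,+) of D^1_{·,·}E[Δ^1_{·,·}|𝐃]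 + E[Δ^{-1}_{·,·}|𝐃], where 𝐃 denotes the full collection of treatments. -/
open Finset MeasureTheory ProbabilityTheory

lemma condexp_sup_const_aux {Ω : Type} {m₁ m₂ : MeasurableSpace Ω}
    {m0 : MeasurableSpace Ω} (hle₁ : m₁ ≤ m0) (hle₂ : m₂ ≤ m0)
    {μ : Measure Ω} [IsProbabilityMeasure μ]
    {f : Ω → ℝ} (hf : Integrable f μ) (c : ℝ)
    (h12 : ∀ s₁ s₂, MeasurableSet[m₁] s₁ → MeasurableSet[m₂] s₂ →
      ∫ ω in s₁ ∩ s₂, f ω ∂μ = c * (μ (s₁ ∩ s₂)).toReal) :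
    μ[f | m₁ ⊔ m₂] =ᵐ[μ] fun _ => c := by
  have hle : m₁ ⊔ m₂ ≤ m0 := sup_le hle₁ hle₂
  set S : Set (Set Ω) :=
    {s | ∃ s₁ s₂, MeasurableSet[m₁] s₁ ∧ MeasurableSet[m₂] s₂ ∧ s = s₁ ∩ s₂} with hS
  have h_eq : m₁ ⊔ m₂ = MeasurableSpace.generateFrom S := by
    refine le_antisymm (sup_le ?_ ?_) (MeasurableSpace.generateFrom_le ?_)
    · exact fun s hs => MeasurableSpace.measurableSet_generateFrom
        ⟨s, Set.univ, hs, MeasurableSet.univ, (Set.inter_univ s).symm⟩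
    · exact fun s hs => MeasurableSpace.measurableSet_generateFrom
        ⟨Set.univ, s, MeasurableSet.univ, hs, (Set.univ_inter s).symm⟩
    · rintro s ⟨s₁, s₂, h₁, h₂, rfl⟩
      exact MeasurableSet.inter ((le_sup_left : m₁ ≤ m₁ ⊔ m₂) _ h₁)
        ((le_sup_right : m₂ ≤ m₁ ⊔ m₂) _ h₂)
  have h_pi : IsPiSystem S := by
    rintro s ⟨s₁, s₂, h₁, h₂, rfl⟩ u ⟨u₁, u₂, h₃, h₄, rfl⟩ -
    exact ⟨s₁ ∩ u₁, s₂ ∩ u₂, h₁.inter h₃, h₂.inter h₄, Set.inter_inter_inter_comm _ _ _ _⟩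
  have htot : ∫ ω, f ω ∂μ = c := by
    have := h12 Set.univ Set.univ MeasurableSet.univ MeasurableSet.univ
    simpa using this
  have key : ∀ s, MeasurableSet[m₁ ⊔ m₂] s → ∫ ω in s, f ω ∂μ = c * (μ s).toReal := by
    refine MeasurableSpace.induction_on_inter (m := m₁ ⊔ m₂)
      (C := fun s _ => ∫ ω in s, f ω ∂μ = c * (μ s).toReal) h_eq h_pi ?_ ?_ ?_ ?_
    · simp
    · rintro s ⟨s₁, s₂, h₁, h₂, rfl⟩
      exact h12 s₁ s₂ h₁ h₂
    · intro s hsm ih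
      have hsm0 : MeasurableSet[m0] s := hle s hsm
      have hadd : ∫ ω in s, f ω ∂μ + ∫ ω in sᶜ, f ω ∂μ = ∫ ω, f ω ∂μ :=
        integral_add_compl hsm0 hf
      have hμc : μ sᶜ = 1 - μ s := prob_compl_eq_one_sub hsm0
      have hμ1 : (μ s) ≤ 1 := prob_le_one
      have htr : (μ sᶜ).toReal = 1 - (μ s).toReal := by
        rw [hμc, ENNReal.toReal_sub_of_le hμ1 ENNReal.one_ne_top, ENNReal.toReal_one]
      rw [htr, mul_one_sub]
      have h1 : ∫ ω in sᶜ, f ω ∂μ = c - c * (μ s).toReal := by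
        rw [← ih, ← htot, ← hadd]; ring
      linarith [h1]
    · intro u hdisj hmeas ih
      have hmeas0 : ∀ i, MeasurableSet[m0] (u i) := fun i => hle _ (hmeas i)
      rw [integral_iUnion hmeas0 hdisj hf.integrableOn, measure_iUnion hdisj hmeas0,
        ENNReal.tsum_toReal_eq (fun i => measure_ne_top μ _)]
      rw [tsum_congr ih, tsum_mul_left]
  refine (ae_eq_condExp_of_forall_setIntegral_eq hle hf ?_ ?_ ?_).symm
  · intro s _ hμs
    exact (integrableOn_const hμs.ne)
  · intro s hs _
    rw [key s hs, setIntegral_const, smul_eq_mul, mul_comm, measureReal_def]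
  · exact stronglyMeasurable_const.aestronglyMeasurable

/-- Double-difference lemma (Lemma 2). In a sharp design with a
binary first treatment `D¹` and other treatments `Dm1` valued in `{0,1}^{K−1}`,
under (i) mutual independence across groups of the per-group treatments and
potential outcomes, (ii) strong exogeneity of the never-treated outcome with
respect to the group's own treatment path, and (iii) common trends of the
never-treated outcome, the conditional (on all treatments `𝐃`) double
difference of observed outcomes equals the signed sum over the four cells of
`D¹·E[Δ¹|𝐃] + E[Δ^{-1}|𝐃]`. Time runs over `{1,...,T}`. -/
theorem double_difference_lemma
    (G T K : ℕ) (hT : 1 ≤ T) (hK : 1 ≤ K)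
    {Ω : Type} [inst : MeasurableSpace Ω]
    (μ : Measure Ω) [IsProbabilityMeasure μ]
    (po : Fin G → ℕ → Bool → (Fin (K - 1) → Bool) → Ω → ℝ)
    (hpomeas : ∀ g t d dm, Measurable (po g t d dm))
    (hpoint : ∀ g t d dm, Integrable (po g t d dm) μ)
    (D1 : Fin G → ℕ → Ω → Bool)
    (Dm1 : Fin G → ℕ → Ω → Fin (K - 1) → Bool)
    (hD1meas : ∀ g t, Measurable (D1 g t))
    (hDm1meas : ∀ g t, Measurable (Dm1 g t))
    (Y : Fin G → ℕ → Ω → ℝ)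
    (hY : ∀ g t ω, Y g t ω = po g t (D1 g t ω) (Dm1 g t ω) ω)
    -- σ-algebra generated by all treatments 𝐃
    (mD : MeasurableSpace Ω)
    (hmD : mD = MeasurableSpace.comap
      (fun ω => fun (g : Fin G) (t : ℕ) => (D1 g t ω, Dm1 g t ω)) inferInstance)
    -- σ-algebra generated by group g's own treatments
    (mDg : Fin G → MeasurableSpace Ω)
    (hmDg : ∀ g, mDg g = MeasurableSpace.comap
      (fun ω => fun (t : ℕ) => (D1 g t ω, Dm1 g t ω)) inferInstance)
    -- (i) independent groups
    (hindep : iIndepFun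
      (fun (g : Fin G) (ω : Ω) =>
        ((fun (t : ℕ) => (D1 g t ω, Dm1 g t ω)),
         (fun (t : ℕ) (d : Bool) (dm : Fin (K - 1) → Bool) => po g t d dm ω))) μ)
    -- (ii) strong exogeneity of the never-treated outcome
    (hexo : ∀ g t, 2 ≤ t → t ≤ T →
      μ[fun ω => po g t false (fun _ => false) ω -
          po g (t - 1) false (fun _ => false) ω | mDg g]
        =ᵐ[μ] fun _ => ∫ ω, (po g t false (fun _ => false) ω -
          po g (t - 1) false (fun _ => false) ω) ∂μ)
    -- (iii) common trends of the never-treated outcome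
    (hct : ∀ g g' t, 2 ≤ t → t ≤ T →
      ∫ ω, (po g t false (fun _ => false) ω -
        po g (t - 1) false (fun _ => false) ω) ∂μ =
      ∫ ω, (po g' t false (fun _ => false) ω -
        po g' (t - 1) false (fun _ => false) ω) ∂μ)
    -- effects of the first treatment and of the other treatments
    (Δ1 Δm : Fin G → ℕ → Ω → ℝ)
    (hΔ1 : ∀ g t ω, Δ1 g t ω =
      po g t true (Dm1 g t ω) ω - po g t false (Dm1 g t ω) ω)
    (hΔm : ∀ g t ω, Δm g t ω =
      po g t false (Dm1 g t ω) ω - po g t false (fun _ => false) ω)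
    (d1R : Fin G → ℕ → Ω → ℝ)
    (hd1R : ∀ g t ω, d1R g t ω = if D1 g t ω then 1 else 0) :
    ∀ g g' t t', 1 ≤ t → t ≤ T → 1 ≤ t' → t' ≤ T →
      (fun ω => (μ[Y g t | mD]) ω - (μ[Y g t' | mD]) ω -
        ((μ[Y g' t | mD]) ω - (μ[Y g' t' | mD]) ω))
      =ᵐ[μ] fun ω =>
        (d1R g t ω * (μ[Δ1 g t | mD]) ω + (μ[Δm g t | mD]) ω)
        - (d1R g' t ω * (μ[Δ1 g' t | mD]) ω + (μ[Δm g' t | mD]) ω)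
        - (d1R g t' ω * (μ[Δ1 g t' | mD]) ω + (μ[Δm g t' | mD]) ω)
        + (d1R g' t' ω * (μ[Δ1 g' t' | mD]) ω + (μ[Δm g' t' | mD]) ω) := by
  classical
  intro g g' t t' ht1 htT ht'1 ht'T
  letI instΩ : MeasurableSpace Ω := inst
  -- the per-group data map (treatments and potential outcomes)
  set Xg : Fin G → Ω →
      (ℕ → Bool × (Fin (K - 1) → Bool)) × (ℕ → Bool → (Fin (K - 1) → Bool) → ℝ) :=
    fun g ω => ((fun (t : ℕ) => (D1 g t ω, Dm1 g t ω)),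
      (fun (t : ℕ) (d : Bool) (dm : Fin (K - 1) → Bool) => po g t d dm ω)) with hXg
  have hXmeas : ∀ γ, Measurable[inst] (Xg γ) := fun γ =>
    (measurable_pi_lambda _ fun τ => (hD1meas γ τ).prodMk (hDm1meas γ τ)).prodMk
      (measurable_pi_lambda _ fun τ => measurable_pi_lambda _ fun d =>
        measurable_pi_lambda _ fun dm => hpomeas γ τ d dm)
  have hmDgle : ∀ γ, mDg γ ≤ inst := fun γ => by
    rw [hmDg]
    exact (measurable_pi_lambda _ fun τ => (hD1meas γ τ).prodMk (hDm1meas γ τ)).comap_le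
  have hmDle : mD ≤ inst := by
    rw [hmD]
    exact (measurable_pi_lambda _ fun γ => measurable_pi_lambda _ fun τ =>
      (hD1meas γ τ).prodMk (hDm1meas γ τ)).comap_le
  have hmDgle' : ∀ γ, mDg γ ≤ MeasurableSpace.comap (Xg γ) inferInstance := fun γ => by
    rw [hmDg]
    have h1 : (fun ω => fun (t : ℕ) => (D1 γ t ω, Dm1 γ t ω)) = (fun p => p.1) ∘ (Xg γ) := rfl
    rw [h1, ← MeasurableSpace.comap_comp]
    exact MeasurableSpace.comap_mono measurable_fst.comap_le
  -- mD as a supremum of the per-group treatment σ-algebras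
  have hmDsup : mD = ⨆ γ, mDg γ := by
    rw [hmD]
    have h0 : (inferInstance : MeasurableSpace (Fin G → ℕ → Bool × (Fin (K - 1) → Bool))) =
        ⨆ γ : Fin G, MeasurableSpace.comap (fun p => p γ) inferInstance := rfl
    rw [h0, MeasurableSpace.comap_iSup]
    refine iSup_congr fun γ => ?_
    rw [MeasurableSpace.comap_comp, hmDg]
    rfl
  -- independence of each group's data from the other groups' treatments
  have hiI : iIndep (fun γ => MeasurableSpace.comap (Xg γ) inferInstance) μ := hindep.iIndep
  have hIndepG : ∀ γ : Fin G,
      Indep (MeasurableSpace.comap (Xg γ) inferInstance)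
        (⨆ γ' ∈ ({γ}ᶜ : Set (Fin G)), mDg γ') μ := by
    intro γ
    have h := ProbabilityTheory.indep_biSup_compl
      (fun γ' => (hXmeas γ').comap_le) hiI {γ}
    refine indep_of_indep_of_le_right (indep_of_indep_of_le_left h ?_) ?_
    · exact le_biSup (f := fun γ' => MeasurableSpace.comap (Xg γ') inferInstance)
        (Set.mem_singleton γ)
    · exact iSup₂_mono fun γ' _ => hmDgle' γ'
  -- never-treated potential outcome
  set Nf : Fin G → ℕ → Ω → ℝ := fun g t ω => po g t false (fun _ => false) ω with hNf
  have hNint : ∀ γ τ, Integrable (Nf γ τ) μ := fun γ τ => hpoint γ τ false _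
  have hNmeasX : ∀ γ τ, Measurable[MeasurableSpace.comap (Xg γ) inferInstance] (Nf γ τ) := by
    intro γ τ
    have hφ : Measurable fun p : (ℕ → Bool × (Fin (K - 1) → Bool)) ×
        (ℕ → Bool → (Fin (K - 1) → Bool) → ℝ) => p.2 τ false (fun _ => false) :=
      (measurable_pi_apply _).comp ((measurable_pi_apply _).comp
        ((measurable_pi_apply _).comp measurable_snd))
    exact hφ.comp (measurable_iff_comap_le.mpr le_rfl)
  have hexo' : ∀ γ τ, 2 ≤ τ → τ ≤ T →
      (μ[fun ω => Nf γ τ ω - Nf γ (τ - 1) ω | mDg γ]) =ᵐ[μ]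
        fun _ => ∫ ω, (Nf γ τ ω - Nf γ (τ - 1) ω) ∂μ := fun γ τ h2 hT' => hexo γ τ h2 hT'
  have hct' : ∀ γ γ' τ, 2 ≤ τ → τ ≤ T →
      ∫ ω, (Nf γ τ ω - Nf γ (τ - 1) ω) ∂μ = ∫ ω, (Nf γ' τ ω - Nf γ' (τ - 1) ω) ∂μ :=
    fun γ γ' τ h2 hT' => hct γ γ' τ h2 hT'
  -- one-step: the conditional expectation given all treatments of a one-period
  -- difference of never-treated outcomes is a.s. constant
  have oneStep : ∀ γ τ, 2 ≤ τ → τ ≤ T →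
      (μ[fun ω => Nf γ τ ω - Nf γ (τ - 1) ω | mD]) =ᵐ[μ]
        fun _ => ∫ ω, (Nf γ τ ω - Nf γ (τ - 1) ω) ∂μ := by
    intro γ τ h2 hτT
    have hhint : Integrable (fun ω => Nf γ τ ω - Nf γ (τ - 1) ω) μ :=
      (hNint γ τ).sub (hNint γ (τ - 1))
    have hsplit : mD = mDg γ ⊔ ⨆ γ' ∈ ({γ}ᶜ : Set (Fin G)), mDg γ' := by
      rw [hmDsup, iSup_split_single (fun γ' => mDg γ') γ]
      rfl
    rw [hsplit]
    set m₂ : MeasurableSpace Ω := ⨆ γ' ∈ ({γ}ᶜ : Set (Fin G)), mDg γ' with hm₂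
    letI instΩ2 : MeasurableSpace Ω := inst
    have hm₂le : m₂ ≤ inst := iSup₂_le fun γ' _ => hmDgle γ'
    have hind : Indep (MeasurableSpace.comap (Xg γ) inferInstance) m₂ μ := hIndepG γ
    refine condexp_sup_const_aux (hmDgle γ) hm₂le hhint _ ?_
    intro s₁ s₂ hs₁ hs₂
    have hs₁X : MeasurableSet[MeasurableSpace.comap (Xg γ) inferInstance] s₁ := hmDgle' γ s₁ hs₁
    have hs₁0 : MeasurableSet[inst] s₁ := hmDgle γ s₁ hs₁
    have hs₂0 : MeasurableSet[inst] s₂ := hm₂le s₂ hs₂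
    have hset1 : ∫ ω in s₁, (Nf γ τ ω - Nf γ (τ - 1) ω) ∂μ =
        (∫ ω, (Nf γ τ ω - Nf γ (τ - 1) ω) ∂μ) * (μ s₁).toReal := by
      rw [← setIntegral_condExp (hmDgle γ) hhint hs₁,
        setIntegral_congr_ae hs₁0 ((hexo' γ τ h2 hτT).mono (fun ω hω _ => hω)),
        setIntegral_const, smul_eq_mul, mul_comm, measureReal_def]
    have hi1 : Integrable (s₁.indicator (fun ω => Nf γ τ ω - Nf γ (τ - 1) ω)) μ :=
      hhint.indicator hs₁0
    have hi2 : Integrable (s₂.indicator (fun _ => (1 : ℝ))) μ :=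
      (integrable_const 1).indicator hs₂0
    have hIF : IndepFun (s₁.indicator (fun ω => Nf γ τ ω - Nf γ (τ - 1) ω))
        (s₂.indicator (fun _ => (1 : ℝ))) μ := by
      rw [IndepFun_iff_Indep]
      refine indep_of_indep_of_le_right (indep_of_indep_of_le_left hind ?_) ?_
      · exact (Measurable.indicator ((hNmeasX γ τ).sub (hNmeasX γ (τ - 1))) hs₁X).comap_le
      · exact (Measurable.indicator measurable_const hs₂).comap_le
    have hmul := hIF.integral_mul_eq_mul_integral hi1.aestronglyMeasurable hi2.aestronglyMeasurable
    have hll : (s₁.indicator (fun ω => Nf γ τ ω - Nf γ (τ - 1) ω)) *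
        (s₂.indicator (fun _ => (1 : ℝ))) =
        (s₁ ∩ s₂).indicator (fun ω => Nf γ τ ω - Nf γ (τ - 1) ω) := by
      funext ω
      by_cases h1 : ω ∈ s₁ <;> by_cases h2 : ω ∈ s₂ <;>
        simp [Set.indicator_apply, h1, h2, Set.mem_inter_iff]
    rw [hll] at hmul
    rw [integral_indicator (hs₁0.inter hs₂0), integral_indicator hs₁0,
      integral_indicator hs₂0] at hmul
    have hμmul : μ (s₁ ∩ s₂) = μ s₁ * μ s₂ := by
      have hind2 : Indep (mDg γ) m₂ μ := indep_of_indep_of_le_left hind (hmDgle' γ)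
      exact ((Indep_iff _ _ _).mp hind2) s₁ s₂ hs₁ hs₂
    rw [hmul, hset1, hμmul, ENNReal.toReal_mul]
    rw [setIntegral_const, smul_eq_mul, mul_one, measureReal_def]
    ring
  -- telescoping: conditional expectations of long differences are constant
  have claimA : ∀ γ s, 1 ≤ s → ∀ τ, s ≤ τ → τ ≤ T →
      (fun ω => (μ[Nf γ τ | mD]) ω - (μ[Nf γ s | mD]) ω) =ᵐ[μ]
        fun _ => (∫ ω, Nf γ τ ω ∂μ) - ∫ ω, Nf γ s ω ∂μ := by
    intro γ s h1 τ hsτ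
    induction τ, hsτ using Nat.le_induction with
    | base =>
      intro _
      simp only [sub_self]
      exact Filter.EventuallyEq.rfl
    | succ τ hsτ ih =>
      intro hτ1T
      have hτT : τ ≤ T := by omega
      have hstep := oneStep γ (τ + 1) (by omega) hτ1T
      simp only [Nat.add_sub_cancel] at hstep
      have hA : (fun ω => (μ[Nf γ (τ + 1) | mD]) ω - (μ[Nf γ τ | mD]) ω) =ᵐ[μ]
          fun _ => ∫ ω, (Nf γ (τ + 1) ω - Nf γ τ ω) ∂μ := by
        have h1' : (μ[fun ω => Nf γ (τ + 1) ω - Nf γ τ ω | mD]) =ᵐ[μ]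
            fun ω => (μ[Nf γ (τ + 1) | mD]) ω - (μ[Nf γ τ | mD]) ω :=
          condExp_sub (hNint γ (τ + 1)) (hNint γ τ) mD
        exact h1'.symm.trans hstep
      have hEint : ∫ ω, (Nf γ (τ + 1) ω - Nf γ τ ω) ∂μ =
          (∫ ω, Nf γ (τ + 1) ω ∂μ) - ∫ ω, Nf γ τ ω ∂μ :=
        integral_sub (hNint γ (τ + 1)) (hNint γ τ)
      filter_upwards [hA, ih hτT] with ω hω1 hω2
      rw [hEint] at hω1
      linarith [hω1, hω2]
  have claimC : ∀ (γ γ' : Fin G) s, 1 ≤ s → ∀ τ, s ≤ τ → τ ≤ T →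
      (∫ ω, Nf γ τ ω ∂μ) - ∫ ω, Nf γ s ω ∂μ =
        (∫ ω, Nf γ' τ ω ∂μ) - ∫ ω, Nf γ' s ω ∂μ := by
    intro γ γ' s h1 τ hsτ
    induction τ, hsτ using Nat.le_induction with
    | base => intro _; simp
    | succ τ hsτ ih =>
      intro hτ1T
      have hτT : τ ≤ T := by omega
      have hstep := hct' γ γ' (τ + 1) (by omega) hτ1T
      simp only [Nat.add_sub_cancel] at hstep
      rw [integral_sub (hNint γ (τ + 1)) (hNint γ τ),
        integral_sub (hNint γ' (τ + 1)) (hNint γ' τ)] at hstep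
      linarith [ih hτT, hstep]
  have claimA' : ∀ γ τ τ', 1 ≤ τ → τ ≤ T → 1 ≤ τ' → τ' ≤ T →
      (fun ω => (μ[Nf γ τ | mD]) ω - (μ[Nf γ τ' | mD]) ω) =ᵐ[μ]
        fun _ => (∫ ω, Nf γ τ ω ∂μ) - ∫ ω, Nf γ τ' ω ∂μ := by
    intro γ τ τ' h1 h2 h3 h4
    rcases le_total τ' τ with h | h
    · exact claimA γ τ' h3 τ h h2
    · have hh := claimA γ τ h1 τ' h h4
      filter_upwards [hh] with ω hω
      linarith [hω]
  have claimC' : ∀ (γ γ' : Fin G) τ τ', 1 ≤ τ → τ ≤ T → 1 ≤ τ' → τ' ≤ T →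
      (∫ ω, Nf γ τ ω ∂μ) - ∫ ω, Nf γ τ' ω ∂μ =
        (∫ ω, Nf γ' τ ω ∂μ) - ∫ ω, Nf γ' τ' ω ∂μ := by
    intro γ γ' τ τ' h1 h2 h3 h4
    rcases le_total τ' τ with h | h
    · exact claimC γ γ' τ' h3 τ h h2
    · have hh := claimC γ γ' τ h1 τ' h h4
      linarith [hh]
  -- integrability of potential outcomes with random other-treatment argument
  have hpoD_int : ∀ γ τ d, Integrable (fun ω => po γ τ d (Dm1 γ τ ω) ω) μ := by
    intro γ τ d
    have hrep : (fun ω => po γ τ d (Dm1 γ τ ω) ω) =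
        fun ω => ∑ dm : Fin (K - 1) → Bool,
          (Dm1 γ τ ⁻¹' {dm}).indicator (po γ τ d dm) ω := by
      funext ω
      symm
      rw [Finset.sum_eq_single_of_mem (Dm1 γ τ ω) (Finset.mem_univ _)]
      · have hmem : ω ∈ Dm1 γ τ ⁻¹' {Dm1 γ τ ω} := rfl
        exact Set.indicator_of_mem hmem _
      · intro b _ hb
        have hnm : ω ∉ Dm1 γ τ ⁻¹' {b} :=
          fun hmem => hb (Set.mem_singleton_iff.mp hmem).symm
        exact Set.indicator_of_notMem hnm _
    rw [hrep]
    exact integrable_finset_sum _ fun dm _ =>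
      (hpoint γ τ d dm).indicator (hDm1meas γ τ (measurableSet_singleton dm))
  have hΔ1int : ∀ γ τ, Integrable (Δ1 γ τ) μ := by
    intro γ τ
    have h : Δ1 γ τ = fun ω => po γ τ true (Dm1 γ τ ω) ω - po γ τ false (Dm1 γ τ ω) ω :=
      funext (hΔ1 γ τ)
    rw [h]; exact (hpoD_int γ τ true).sub (hpoD_int γ τ false)
  have hΔmint : ∀ γ τ, Integrable (Δm γ τ) μ := by
    intro γ τ
    have h : Δm γ τ = fun ω => po γ τ false (Dm1 γ τ ω) ω - Nf γ τ ω := funext (hΔm γ τ)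
    rw [h]; exact (hpoD_int γ τ false).sub (hNint γ τ)
  -- the treatment dummy is measurable with respect to mD and bounded
  have hd1Rsm : ∀ γ τ, StronglyMeasurable[mD] (d1R γ τ) := by
    intro γ τ
    have hD1mD : Measurable[mD] (D1 γ τ) := by
      rw [hmD]
      have hF : Measurable[MeasurableSpace.comap
          (fun ω => fun (g : Fin G) (t : ℕ) => (D1 g t ω, Dm1 g t ω)) inferInstance]
          (fun ω => fun (g : Fin G) (t : ℕ) => (D1 g t ω, Dm1 g t ω)) :=
        measurable_iff_comap_le.mpr le_rfl
      exact measurable_fst.comp ((measurable_pi_apply τ).comp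
        ((measurable_pi_apply γ).comp hF))
    have h : d1R γ τ = fun ω => if D1 γ τ ω then (1 : ℝ) else 0 := funext (hd1R γ τ)
    rw [h]
    exact (Measurable.ite (hD1mD (measurableSet_singleton true))
      measurable_const measurable_const).stronglyMeasurable
  have hd1RΔ1int : ∀ γ τ, Integrable (fun ω => d1R γ τ ω * Δ1 γ τ ω) μ := by
    intro γ τ
    refine Integrable.bdd_mul (hΔ1int γ τ)
      (((hd1Rsm γ τ).mono hmDle).aestronglyMeasurable) (c := 1) (Filter.Eventually.of_forall fun ω => ?_)
    rw [hd1R γ τ ω]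
    split <;> simp
  -- pointwise decomposition of the observed outcome
  have hkey : ∀ γ τ ω, Y γ τ ω = d1R γ τ ω * Δ1 γ τ ω + Δm γ τ ω + Nf γ τ ω := by
    intro γ τ ω
    simp only [hNf]
    rw [hY γ τ ω, hΔ1 γ τ ω, hΔm γ τ ω, hd1R γ τ ω]
    cases hD : D1 γ τ ω <;> simp <;> ring
  have hYint : ∀ γ τ, Integrable (Y γ τ) μ := by
    intro γ τ
    have h : Y γ τ = fun ω => d1R γ τ ω * Δ1 γ τ ω + Δm γ τ ω + Nf γ τ ω := funext (hkey γ τ)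
    rw [h]
    exact ((hd1RΔ1int γ τ).add (hΔmint γ τ)).add (hNint γ τ)
  -- conditional-expectation decomposition of the observed outcome
  have hdecomp : ∀ γ τ, (μ[Y γ τ | mD]) =ᵐ[μ]
      fun ω => d1R γ τ ω * (μ[Δ1 γ τ | mD]) ω + (μ[Δm γ τ | mD]) ω + (μ[Nf γ τ | mD]) ω := by
    intro γ τ
    have e : Y γ τ = (fun ω => d1R γ τ ω * Δ1 γ τ ω) + (Δm γ τ + Nf γ τ) := by
      funext ω
      simp only [Pi.add_apply]
      rw [hkey γ τ ω]; ring
    have ha : (μ[(fun ω => d1R γ τ ω * Δ1 γ τ ω) + (Δm γ τ + Nf γ τ) | mD]) =ᵐ[μ]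
        μ[fun ω => d1R γ τ ω * Δ1 γ τ ω | mD] + μ[Δm γ τ + Nf γ τ | mD] :=
      condExp_add (hd1RΔ1int γ τ) ((hΔmint γ τ).add (hNint γ τ)) mD
    have hb : (μ[Δm γ τ + Nf γ τ | mD]) =ᵐ[μ] μ[Δm γ τ | mD] + μ[Nf γ τ | mD] :=
      condExp_add (hΔmint γ τ) (hNint γ τ) mD
    have hc : (μ[fun ω => d1R γ τ ω * Δ1 γ τ ω | mD]) =ᵐ[μ]
        fun ω => d1R γ τ ω * (μ[Δ1 γ τ | mD]) ω :=
      condExp_mul_of_stronglyMeasurable_left (hd1Rsm γ τ) (hd1RΔ1int γ τ) (hΔ1int γ τ)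
    rw [e]
    filter_upwards [ha, hb, hc] with ω hωa hωb hωc
    simp only [Pi.add_apply] at hωa hωb ⊢
    rw [hωa, hωb, hωc]
    ring
  -- assemble everything
  have hNg := claimA' g t t' ht1 htT ht'1 ht'T
  have hNg' := claimA' g' t t' ht1 htT ht'1 ht'T
  have hC := claimC' g g' t t' ht1 htT ht'1 ht'T
  filter_upwards [hdecomp g t, hdecomp g t', hdecomp g' t, hdecomp g' t', hNg, hNg']
    with ω e1 e2 e3 e4 e5 e6
  simp only [e1, e2, e3, e4]
  linarith [e5, e6, hC]
end

section
/- Under the assumptions of the preceding double-difference lemma, the TWFE coefficient β_fe = E[β̂_fe], where β̂_fe is the coefficient on D^1_{g,t} in the weighted OLS regression of Y_{g,t} on group fixed effects, time fixed effects, and (D^1_{g,t}, D^{-1}_{g,t}) with weights N_{g,t}, satisfies β_fe = E[ Σ_{(g,t): D^1_{g,t}=1} (N_{g,t}/N_1) w_{g,t} Δ^1_{g,t}(D^{-1}_{g,t}) + Σ_{(g,t): D^{-1}_{g,t} ≠ 𝟎} (N_{g,t}/N_1) w_{g,t} Δ^{-1}_{g,t} ], where N_1 = Σ_{(g,t):D^1_{g,t}=1}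 N_{g,t}, w_{g,t} = ε_{g,t}/Σ_{(g,t):D^1_{g,t}=1}(N_{g,t}/N_1)ε_{g,t}, and ε_{g,t} is the residual of the weighted regression of D^1 on group dummies, time dummies and D^{-1}. Moreover Σ_{(g,t):D^1_{g,t}=1}(N_{g,t}/N_1) w_{g,t} = 1. -/
open Finset MeasureTheory ProbabilityTheory

/-- A quadratic `c ↦ c*L + c^2*Q` nonnegative everywhere forces `L = 0`. -/
lemma aux_foc_lin {L Q : ℝ} (h : ∀ c : ℝ, 0 ≤ c * L + c ^ 2 * Q) : L = 0 := by
  by_contra hL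
  rcases le_or_gt Q 0 with hQ | hQ
  · have h1 := h (-L)
    have hQ2 : (-L) ^ 2 * Q ≤ 0 := mul_nonpos_of_nonneg_of_nonpos (sq_nonneg _) hQ
    have : 0 < L * L := mul_self_pos.2 hL
    linarith
  · have h1 := h (-L / (2 * Q))
    have h2 : (0:ℝ) < 2 * Q := by linarith
    have : -L / (2 * Q) * L + (-L / (2 * Q)) ^ 2 * Q = -(L ^ 2) / (4 * Q) := by
      field_simp; ring
    rw [this, neg_div] at h1
    have hpos : (0:ℝ) < L ^ 2 / (4 * Q) := by positivity
    linarith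
/-- First-order condition from least-squares minimality along direction `x`. -/
lemma aux_foc {ι : Type*} (s : Finset ι) (N r x : ι → ℝ)
    (h : ∀ c : ℝ, ∑ i ∈ s, N i * (r i) ^ 2 ≤ ∑ i ∈ s, N i * (r i - c * x i) ^ 2) :
    ∑ i ∈ s, N i * r i * x i = 0 := by
  have key : ∀ c : ℝ, 0 ≤ c * (-2 * ∑ i ∈ s, N i * r i * x i) + c ^ 2 * ∑ i ∈ s, N i * (x i) ^ 2 := by
    intro c
    have expand : ∑ i ∈ s, N i * (r i - c * x i) ^ 2 =
        ∑ i ∈ s, N i * (r i) ^ 2 + (c * (-2 * ∑ i ∈ s, N i * r i * x i)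
          + c ^ 2 * ∑ i ∈ s, N i * (x i) ^ 2) := by
      rw [Finset.mul_sum, Finset.mul_sum, Finset.mul_sum, ← Finset.sum_add_distrib,
        ← Finset.sum_add_distrib]
      exact Finset.sum_congr rfl fun i _ => by ring
    have := h c
    rw [expand] at this
    linarith
  have := aux_foc_lin key
  linarith

/-- Telescoping. -/
lemma aux_telescope (f : ℕ → ℝ) (t : ℕ) (ht : 1 ≤ t) :
    f t = f 1 + ∑ s ∈ Finset.Icc 2 t, (f s - f (s - 1)) := by
  induction t with
  | zero => omega
  | succ n ih =>
    rcases Nat.lt_or_ge n 1 with hn | hn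
    · interval_cases n
      · simp
    · have hi := ih hn
      have : Finset.Icc 2 (n+1) = insert (n+1) (Finset.Icc 2 n) := by
        ext m; simp only [Finset.mem_Icc, Finset.mem_insert]; omega
      rw [this, Finset.sum_insert (by simp)]
      simp only [Nat.add_sub_cancel]
      linarith

/-- Exchange of a triangular double sum over `Icc`. -/
lemma aux_sum_swap (T : ℕ) (f : ℕ → ℕ → ℝ) :
    ∑ t ∈ Finset.Icc 1 T, ∑ s ∈ Finset.Icc 2 t, f s t
      = ∑ s ∈ Finset.Icc 2 T, ∑ t ∈ Finset.Icc s T, f s t := by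
  have h1 : ∑ t ∈ Finset.Icc 1 T, ∑ s ∈ Finset.Icc 2 t, f s t
      = ∑ t ∈ Finset.Icc 1 T, ∑ s ∈ Finset.Icc 2 T, if s ≤ t then f s t else 0 := by
    refine Finset.sum_congr rfl fun t ht => ?_
    simp only [Finset.mem_Icc] at ht
    have : Finset.Icc 2 t = (Finset.Icc 2 T).filter (fun s => s ≤ t) := by
      ext m; simp only [Finset.mem_Icc, Finset.mem_filter]; omega
    rw [this, Finset.sum_filter]
  rw [h1, Finset.sum_comm]
  refine Finset.sum_congr rfl fun s hs => ?_
  simp only [Finset.mem_Icc] at hs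
  have : Finset.Icc s T = (Finset.Icc 1 T).filter (fun t => s ≤ t) := by
    ext m; simp only [Finset.mem_Icc, Finset.mem_filter]; omega
  rw [this, Finset.sum_filter]

/-- Uniqueness of least-squares residuals via the midpoint argument. -/
lemma aux_residual_unique {ι : Type*} (s : Finset ι) (N : ι → ℝ) (hN : ∀ i ∈ s, 0 < N i)
    (r r' : ι → ℝ)
    (hmid : ∑ i ∈ s, N i * (r i) ^ 2 ≤ ∑ i ∈ s, N i * ((r i + r' i) / 2) ^ 2)
    (heq : ∑ i ∈ s, N i * (r i) ^ 2 = ∑ i ∈ s, N i * (r' i) ^ 2) :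
    ∀ i ∈ s, r i = r' i := by
  have expand : ∑ i ∈ s, N i * ((r i + r' i) / 2) ^ 2
      = (∑ i ∈ s, N i * (r i) ^ 2) / 2 + (∑ i ∈ s, N i * (r' i) ^ 2) / 2
        - ∑ i ∈ s, N i * ((r i - r' i) / 2) ^ 2 := by
    rw [Finset.sum_div, Finset.sum_div, ← Finset.sum_add_distrib, ← Finset.sum_sub_distrib]
    exact Finset.sum_congr rfl fun i _ => by ring
  have key : ∑ i ∈ s, N i * ((r i - r' i) / 2) ^ 2 ≤ 0 := by
    rw [expand] at hmid; linarith
  have hz : ∀ i ∈ s, N i * ((r i - r' i) / 2) ^ 2 = 0 := by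
    rw [← Finset.sum_eq_zero_iff_of_nonneg (fun i hi => mul_nonneg (hN i hi).le (sq_nonneg _))]
    refine le_antisymm key (Finset.sum_nonneg fun i hi => mul_nonneg (hN i hi).le (sq_nonneg _))
  intro i hi
  have := hz i hi
  have hNi := hN i hi
  have h2 : ((r i - r' i) / 2) ^ 2 = 0 := by
    rcases mul_eq_zero.1 this with h | h
    · exact absurd h hNi.ne'
    · exact h
  have := pow_eq_zero_iff (n := 2) (by norm_num) |>.1 h2
  linarith

lemma aux_dcongr {G : ℕ} (tt : Finset ℕ) (f h : Fin G → ℕ → ℝ)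
    (hfh : ∀ g t, f g t = h g t) :
    ∑ g, ∑ t ∈ tt, f g t = ∑ g, ∑ t ∈ tt, h g t :=
  Finset.sum_congr rfl fun g _ => Finset.sum_congr rfl fun t _ => hfh g t

lemma aux_foc2 {G : ℕ} (tt : Finset ℕ) (N r x : Fin G → ℕ → ℝ)
    (h : ∀ c : ℝ, ∑ g, ∑ t ∈ tt, N g t * (r g t) ^ 2
      ≤ ∑ g, ∑ t ∈ tt, N g t * (r g t - c * x g t) ^ 2) :
    ∑ g, ∑ t ∈ tt, N g t * r g t * x g t = 0 := by
  have e1 : ∀ (q : Fin G → ℕ → ℝ), ∑ p ∈ Finset.univ ×ˢ tt, q p.1 p.2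
      = ∑ g, ∑ t ∈ tt, q g t := fun q => Finset.sum_product' _ _ q
  have := aux_foc (Finset.univ ×ˢ tt) (fun p => N p.1 p.2) (fun p => r p.1 p.2)
    (fun p => x p.1 p.2) ?_
  · rw [← e1 (fun g t => N g t * r g t * x g t)]; exact this
  · intro c
    rw [e1 (fun g t => N g t * (r g t) ^ 2), e1 (fun g t => N g t * (r g t - c * x g t) ^ 2)]
    exact h c

lemma aux_sum_ite_g {G : ℕ} (tt : Finset ℕ) (f : Fin G → ℕ → ℝ) (g0 : Fin G) :
    ∑ g, ∑ t ∈ tt, f g t * (if g = g0 then (1:ℝ) else 0) = ∑ t ∈ tt, f g0 t := by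
  have : ∀ g : Fin G, ∑ t ∈ tt, f g t * (if g = g0 then (1:ℝ) else 0)
      = if g = g0 then ∑ t ∈ tt, f g t else 0 := by
    intro g; by_cases h : g = g0 <;> simp [h]
  rw [Finset.sum_congr rfl fun g _ => this g, Finset.sum_ite_eq' Finset.univ g0]
  simp

lemma aux_sum_ite_t {G : ℕ} (tt : Finset ℕ) (f : Fin G → ℕ → ℝ) (t0 : ℕ) (ht0 : t0 ∈ tt) :
    ∑ g : Fin G, ∑ t ∈ tt, f g t * (if t = t0 then (1:ℝ) else 0) = ∑ g, f g t0 := by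
  refine Finset.sum_congr rfl fun g _ => ?_
  have : ∀ t, f g t * (if t = t0 then (1:ℝ) else 0) = if t = t0 then f g t else 0 := by
    intro t; by_cases h : t = t0 <;> simp [h]
  rw [Finset.sum_congr rfl fun t _ => this t, Finset.sum_ite_eq' tt t0, if_pos ht0]

lemma aux_sum_lincomb {G K1 : ℕ} (tt : Finset ℕ) (x : Fin G → ℕ → ℝ)
    (dm : Fin K1 → Fin G → ℕ → ℝ)
    (a : ℝ) (cc : Fin G → ℝ) (v : ℕ → ℝ) (z : Fin K1 → ℝ)
    (h1 : ∀ g0, ∑ t ∈ tt, x g0 t = 0)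
    (h2 : ∀ t0 ∈ tt, ∑ g, x g t0 = 0)
    (h3 : ∀ k, ∑ g, ∑ t ∈ tt, x g t * dm k g t = 0) :
    ∑ g, ∑ t ∈ tt, x g t * (a + cc g + v t + ∑ k, z k * dm k g t) = 0 := by
  have hS : ∀ (g : Fin G) (t : ℕ), ∑ k, z k * (x g t * dm k g t)
      = x g t * ∑ k, z k * dm k g t := by
    intro g t; rw [Finset.mul_sum]; exact Finset.sum_congr rfl fun k _ => by ring
  have point : ∀ (g : Fin G) (t : ℕ), x g t * (a + cc g + v t + ∑ k, z k * dm k g t)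
      = a * x g t + cc g * x g t + v t * x g t + ∑ k, z k * (x g t * dm k g t) := by
    intro g t; rw [hS]; ring
  rw [aux_dcongr tt _ _ point]
  simp only [Finset.sum_add_distrib]
  have T1 : ∑ g : Fin G, ∑ t ∈ tt, a * x g t = 0 := by
    refine Finset.sum_eq_zero fun g _ => ?_
    rw [← Finset.mul_sum, h1 g, mul_zero]
  have T2 : ∑ g : Fin G, ∑ t ∈ tt, cc g * x g t = 0 := by
    refine Finset.sum_eq_zero fun g _ => ?_
    rw [← Finset.mul_sum, h1 g, mul_zero]
  have T3 : ∑ g : Fin G, ∑ t ∈ tt, v t * x g t = 0 := by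
    rw [Finset.sum_comm]
    refine Finset.sum_eq_zero fun t ht => ?_
    rw [← Finset.mul_sum, h2 t ht, mul_zero]
  have T4 : ∑ g : Fin G, ∑ t ∈ tt, ∑ k, z k * (x g t * dm k g t) = 0 := by
    have swap1 : ∀ g : Fin G, ∑ t ∈ tt, ∑ k, z k * (x g t * dm k g t)
        = ∑ k, ∑ t ∈ tt, z k * (x g t * dm k g t) := fun g => Finset.sum_comm
    rw [Finset.sum_congr rfl fun g _ => swap1 g, Finset.sum_comm]
    refine Finset.sum_eq_zero fun k _ => ?_
    have : ∀ g : Fin G, ∑ t ∈ tt, z k * (x g t * dm k g t)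
        = z k * ∑ t ∈ tt, x g t * dm k g t := fun g => (Finset.mul_sum _ _ _).symm
    rw [Finset.sum_congr rfl fun g _ => this g, ← Finset.mul_sum, h3 k, mul_zero]
  rw [T1, T2, T3, T4]; ring

/-- Core algebraic facts about the two-way fixed effects regression at a fixed
realization: the Frisch–Waugh identity and the first-order conditions on the
first-stage residual. -/
lemma aux_regression {G K1 : ℕ} (tt : Finset ℕ) (N y d1 : Fin G → ℕ → ℝ)
    (dm : Fin K1 → Fin G → ℕ → ℝ)
    (α β : ℝ) (γ : Fin G → ℝ) (ν : ℕ → ℝ) (ζ : Fin K1 → ℝ)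
    (hreg : ∀ (α' β' : ℝ) (γ' : Fin G → ℝ) (ν' : ℕ → ℝ) (ζ' : Fin K1 → ℝ),
      ∑ g, ∑ t ∈ tt, N g t * (y g t - α - γ g - ν t - β * d1 g t
        - ∑ k, ζ k * dm k g t) ^ 2 ≤
      ∑ g, ∑ t ∈ tt, N g t * (y g t - α' - γ' g - ν' t - β' * d1 g t
        - ∑ k, ζ' k * dm k g t) ^ 2)
    (a : ℝ) (cc : Fin G → ℝ) (v : ℕ → ℝ) (z : Fin K1 → ℝ)
    (hfs : ∀ (a' : ℝ) (c' : Fin G → ℝ) (v' : ℕ → ℝ) (z' : Fin K1 → ℝ),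
      ∑ g, ∑ t ∈ tt, N g t * (d1 g t - a - cc g - v t - ∑ k, z k * dm k g t) ^ 2 ≤
      ∑ g, ∑ t ∈ tt, N g t * (d1 g t - a' - c' g - v' t - ∑ k, z' k * dm k g t) ^ 2)
    (ε : Fin G → ℕ → ℝ)
    (hε : ∀ g t, ε g t = d1 g t - a - cc g - v t - ∑ k, z k * dm k g t)
    (u : Fin G → ℕ → ℝ)
    (hu : ∀ g t, u g t = y g t - α - γ g - ν t - β * d1 g t - ∑ k, ζ k * dm k g t) :
    (∑ g, ∑ t ∈ tt, N g t * ε g t * y g t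
      = β * ∑ g, ∑ t ∈ tt, N g t * ε g t * d1 g t)
    ∧ (∑ g, ∑ t ∈ tt, N g t * ε g t * d1 g t
      = ∑ g, ∑ t ∈ tt, N g t * ε g t * ε g t)
    ∧ (∀ g0, ∑ t ∈ tt, N g0 t * ε g0 t = 0)
    ∧ (∀ t0 ∈ tt, ∑ g, N g t0 * ε g t0 = 0) := by
  classical
  -- FOCs for the first stage
  have efs : ∀ g t, N g t * (ε g t) ^ 2
      = N g t * (d1 g t - a - cc g - v t - ∑ k, z k * dm k g t) ^ 2 :=
    fun g t => by rw [hε]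
  have eγ : ∀ g0, ∑ t ∈ tt, N g0 t * ε g0 t = 0 := by
    intro g0
    have foc := aux_foc2 tt N ε (fun g t => if g = g0 then (1:ℝ) else 0) ?_
    · rw [aux_sum_ite_g tt (fun g t => N g t * ε g t) g0] at foc
      exact foc
    · intro c
      have H := hfs a (fun g => cc g + if g = g0 then c else 0) v z
      rw [← aux_dcongr tt _ _ efs] at H
      refine le_trans H (le_of_eq (aux_dcongr tt _ _ fun g t => ?_))
      rw [hε]; rcases eq_or_ne g g0 with h | h
      · simp only [if_pos h]; ring
      · simp only [if_neg h]; ring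
  have eν : ∀ t0 ∈ tt, ∑ g, N g t0 * ε g t0 = 0 := by
    intro t0 ht0
    have foc := aux_foc2 tt N ε (fun g t => if t = t0 then (1:ℝ) else 0) ?_
    · rw [aux_sum_ite_t tt (fun g t => N g t * ε g t) t0 ht0] at foc
      exact foc
    · intro c
      have H := hfs a cc (fun t => v t + if t = t0 then c else 0) z
      rw [← aux_dcongr tt _ _ efs] at H
      refine le_trans H (le_of_eq (aux_dcongr tt _ _ fun g t => ?_))
      rw [hε]; rcases eq_or_ne t t0 with h | h
      · simp only [if_pos h]; ring
      · simp only [if_neg h]; ring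
  have eζ : ∀ k0, ∑ g, ∑ t ∈ tt, N g t * ε g t * dm k0 g t = 0 := by
    intro k0
    refine aux_foc2 tt N ε (fun g t => dm k0 g t) ?_
    intro c
    have H := hfs a cc v (fun k => z k + if k = k0 then c else 0)
    rw [← aux_dcongr tt _ _ efs] at H
    refine le_trans H (le_of_eq (aux_dcongr tt _ _ fun g t => ?_))
    have : ∑ k, (z k + if k = k0 then c else 0) * dm k g t
        = (∑ k, z k * dm k g t) + c * dm k0 g t := by
      rw [Finset.sum_congr rfl (g := fun k => z k * dm k g t
          + if k = k0 then c * dm k g t else 0) (fun k _ => by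
        by_cases h : k = k0 <;> simp [h] <;> ring), Finset.sum_add_distrib,
        Finset.sum_ite_eq' Finset.univ k0]
      simp
    rw [hε, this]; ring
  -- FOCs for the long regression
  have ereg : ∀ g t, N g t * (u g t) ^ 2
      = N g t * (y g t - α - γ g - ν t - β * d1 g t - ∑ k, ζ k * dm k g t) ^ 2 :=
    fun g t => by rw [hu]
  have fβ : ∑ g, ∑ t ∈ tt, N g t * u g t * d1 g t = 0 := by
    refine aux_foc2 tt N u (fun g t => d1 g t) ?_
    intro c
    have H := hreg α (β + c) γ ν ζ
    rw [← aux_dcongr tt _ _ ereg] at H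
    refine le_trans H (le_of_eq (aux_dcongr tt _ _ fun g t => ?_))
    rw [hu]; ring
  have fγ : ∀ g0, ∑ t ∈ tt, N g0 t * u g0 t = 0 := by
    intro g0
    have foc := aux_foc2 tt N u (fun g t => if g = g0 then (1:ℝ) else 0) ?_
    · rw [aux_sum_ite_g tt (fun g t => N g t * u g t) g0] at foc
      exact foc
    · intro c
      have H := hreg α β (fun g => γ g + if g = g0 then c else 0) ν ζ
      rw [← aux_dcongr tt _ _ ereg] at H
      refine le_trans H (le_of_eq (aux_dcongr tt _ _ fun g t => ?_))
      rw [hu]; rcases eq_or_ne g g0 with h | h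
      · simp only [if_pos h]; ring
      · simp only [if_neg h]; ring
  have fν : ∀ t0 ∈ tt, ∑ g, N g t0 * u g t0 = 0 := by
    intro t0 ht0
    have foc := aux_foc2 tt N u (fun g t => if t = t0 then (1:ℝ) else 0) ?_
    · rw [aux_sum_ite_t tt (fun g t => N g t * u g t) t0 ht0] at foc
      exact foc
    · intro c
      have H := hreg α β γ (fun t => ν t + if t = t0 then c else 0) ζ
      rw [← aux_dcongr tt _ _ ereg] at H
      refine le_trans H (le_of_eq (aux_dcongr tt _ _ fun g t => ?_))
      rw [hu]; rcases eq_or_ne t t0 with h | h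
      · simp only [if_pos h]; ring
      · simp only [if_neg h]; ring
  have fζ : ∀ k0, ∑ g, ∑ t ∈ tt, N g t * u g t * dm k0 g t = 0 := by
    intro k0
    refine aux_foc2 tt N u (fun g t => dm k0 g t) ?_
    intro c
    have H := hreg α β γ ν (fun k => ζ k + if k = k0 then c else 0)
    rw [← aux_dcongr tt _ _ ereg] at H
    refine le_trans H (le_of_eq (aux_dcongr tt _ _ fun g t => ?_))
    have : ∑ k, (ζ k + if k = k0 then c else 0) * dm k g t
        = (∑ k, ζ k * dm k g t) + c * dm k0 g t := by
      rw [Finset.sum_congr rfl (g := fun k => ζ k * dm k g t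
          + if k = k0 then c * dm k g t else 0) (fun k _ => by
        by_cases h : k = k0 <;> simp [h] <;> ring), Finset.sum_add_distrib,
        Finset.sum_ite_eq' Finset.univ k0]
      simp
    rw [hu, this]; ring
  -- ∑ N ε d1 = ∑ N ε ε
  have I4 : ∑ g, ∑ t ∈ tt, N g t * ε g t * d1 g t
      = ∑ g, ∑ t ∈ tt, N g t * ε g t * ε g t := by
    have lz := aux_sum_lincomb tt (fun g t => N g t * ε g t) dm a cc v z eγ eν eζ
    have pt : ∀ g t, N g t * ε g t * d1 g t = N g t * ε g t * ε g t
        + (N g t * ε g t) * (a + cc g + v t + ∑ k, z k * dm k g t) := by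
      intro g t
      have h := hε g t
      have : d1 g t = ε g t + (a + cc g + v t + ∑ k, z k * dm k g t) := by linarith
      rw [this]; ring
    rw [aux_dcongr tt _ _ pt]
    simp only [Finset.sum_add_distrib]
    rw [lz, add_zero]
  -- ∑ N u ε = 0
  have I5 : ∑ g, ∑ t ∈ tt, N g t * u g t * ε g t = 0 := by
    have lz2 := aux_sum_lincomb tt (fun g t => N g t * u g t) dm a cc v z fγ fν fζ
    have pt2 : ∀ g t, N g t * u g t * ε g t = N g t * u g t * d1 g t
        - (N g t * u g t) * (a + cc g + v t + ∑ k, z k * dm k g t) := by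
      intro g t; rw [hε]; ring
    rw [aux_dcongr tt _ _ pt2]
    simp only [Finset.sum_sub_distrib]
    rw [lz2, fβ, sub_zero]
  -- main identity
  have I6 : ∑ g, ∑ t ∈ tt, N g t * ε g t * y g t
      = β * ∑ g, ∑ t ∈ tt, N g t * ε g t * d1 g t := by
    have lz3 := aux_sum_lincomb tt (fun g t => N g t * ε g t) dm α γ ν ζ eγ eν eζ
    have pt3 : ∀ g t, N g t * ε g t * y g t = N g t * u g t * ε g t
        + (N g t * ε g t) * (α + γ g + ν t + ∑ k, ζ k * dm k g t)
        + β * (N g t * ε g t * d1 g t) := by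
      intro g t
      have h := hu g t
      have : y g t = u g t + (α + γ g + ν t + ∑ k, ζ k * dm k g t) + β * d1 g t := by
        linarith
      rw [this]; ring
    rw [aux_dcongr tt _ _ pt3]
    simp only [Finset.sum_add_distrib]
    rw [I5, lz3]
    have pull : ∑ g, ∑ t ∈ tt, β * (N g t * ε g t * d1 g t)
        = β * ∑ g, ∑ t ∈ tt, N g t * ε g t * d1 g t := by
      rw [Finset.mul_sum]
      exact Finset.sum_congr rfl fun g _ => (Finset.mul_sum _ _ _).symm
    rw [pull]; ring
  exact ⟨I6, I4, eγ, eν⟩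

/-- The first-stage residual is uniquely determined by the data. -/
lemma aux_residual_data_unique {G K1 : ℕ} (tt : Finset ℕ) (N : Fin G → ℕ → ℝ)
    (hN : ∀ g t, 0 < N g t)
    (d1 d1' : Fin G → ℕ → ℝ) (dm dm' : Fin K1 → Fin G → ℕ → ℝ)
    (hdata1 : ∀ g, ∀ t ∈ tt, d1 g t = d1' g t)
    (hdatam : ∀ k g, ∀ t ∈ tt, dm k g t = dm' k g t)
    (a : ℝ) (cc : Fin G → ℝ) (v : ℕ → ℝ) (z : Fin K1 → ℝ)
    (hfs : ∀ (a' : ℝ) (c' : Fin G → ℝ) (v' : ℕ → ℝ) (z' : Fin K1 → ℝ),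
      ∑ g, ∑ t ∈ tt, N g t * (d1 g t - a - cc g - v t - ∑ k, z k * dm k g t) ^ 2 ≤
      ∑ g, ∑ t ∈ tt, N g t * (d1 g t - a' - c' g - v' t - ∑ k, z' k * dm k g t) ^ 2)
    (a' : ℝ) (cc' : Fin G → ℝ) (v' : ℕ → ℝ) (z' : Fin K1 → ℝ)
    (hfs' : ∀ (a'' : ℝ) (c'' : Fin G → ℝ) (v'' : ℕ → ℝ) (z'' : Fin K1 → ℝ),
      ∑ g, ∑ t ∈ tt, N g t * (d1' g t - a' - cc' g - v' t - ∑ k, z' k * dm' k g t) ^ 2 ≤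
      ∑ g, ∑ t ∈ tt, N g t * (d1' g t - a'' - c'' g - v'' t - ∑ k, z'' k * dm' k g t) ^ 2)
    (ε ε' : Fin G → ℕ → ℝ)
    (hε : ∀ g t, ε g t = d1 g t - a - cc g - v t - ∑ k, z k * dm k g t)
    (hε' : ∀ g t, ε' g t = d1' g t - a' - cc' g - v' t - ∑ k, z' k * dm' k g t) :
    ∀ g, ∀ t ∈ tt, ε g t = ε' g t := by
  classical
  -- pointwise translation of the primed objective into unprimed data on `tt`
  have transfer : ∀ (b : ℝ) (e : Fin G → ℝ) (w : ℕ → ℝ) (x : Fin K1 → ℝ),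
      ∀ g, ∀ t ∈ tt, N g t * (d1' g t - b - e g - w t - ∑ k, x k * dm' k g t) ^ 2
        = N g t * (d1 g t - b - e g - w t - ∑ k, x k * dm k g t) ^ 2 := by
    intro b e w x g t ht
    have h2 : ∑ k, x k * dm' k g t = ∑ k, x k * dm k g t :=
      Finset.sum_congr rfl fun k _ => by rw [hdatam k g t ht]
    rw [hdata1 g t ht, h2]
  have dcongr : ∀ (f h : Fin G → ℕ → ℝ), (∀ g, ∀ t ∈ tt, f g t = h g t) →
      ∑ g, ∑ t ∈ tt, f g t = ∑ g, ∑ t ∈ tt, h g t := fun f h hfh =>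
    Finset.sum_congr rfl fun g _ => Finset.sum_congr rfl fun t ht => hfh g t ht
  have hεsq : ∑ g, ∑ t ∈ tt, N g t * (ε g t) ^ 2
      = ∑ g, ∑ t ∈ tt, N g t * (d1 g t - a - cc g - v t - ∑ k, z k * dm k g t) ^ 2 :=
    dcongr _ _ fun g t _ => by rw [hε]
  have hε'sq : ∑ g, ∑ t ∈ tt, N g t * (ε' g t) ^ 2
      = ∑ g, ∑ t ∈ tt, N g t * (d1 g t - a' - cc' g - v' t - ∑ k, z' k * dm k g t) ^ 2 :=
    dcongr _ _ fun g t ht => by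
      have h2 : ∑ k, z' k * dm' k g t = ∑ k, z' k * dm k g t :=
        Finset.sum_congr rfl fun k _ => by rw [hdatam k g t ht]
      rw [hε', hdata1 g t ht, h2]
  -- equality of minimal values
  have h1 : ∑ g, ∑ t ∈ tt, N g t * (ε g t) ^ 2 ≤ ∑ g, ∑ t ∈ tt, N g t * (ε' g t) ^ 2 := by
    rw [hεsq, hε'sq]; exact hfs a' cc' v' z'
  have h2 : ∑ g, ∑ t ∈ tt, N g t * (ε' g t) ^ 2 ≤ ∑ g, ∑ t ∈ tt, N g t * (ε g t) ^ 2 := by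
    have H := hfs' a cc v z
    have e1 : ∑ g, ∑ t ∈ tt, N g t * (d1' g t - a' - cc' g - v' t - ∑ k, z' k * dm' k g t) ^ 2
        = ∑ g, ∑ t ∈ tt, N g t * (ε' g t) ^ 2 := dcongr _ _ fun g t _ => by rw [hε']
    have e2 : ∑ g, ∑ t ∈ tt, N g t * (d1' g t - a - cc g - v t - ∑ k, z k * dm' k g t) ^ 2
        = ∑ g, ∑ t ∈ tt, N g t * (ε g t) ^ 2 :=
      dcongr _ _ fun g t ht => by rw [transfer a cc v z g t ht, hε]
    rw [e1, e2] at H; exact H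
  have heq : ∑ g, ∑ t ∈ tt, N g t * (ε g t) ^ 2 = ∑ g, ∑ t ∈ tt, N g t * (ε' g t) ^ 2 :=
    le_antisymm h1 h2
  -- midpoint
  have hmid : ∑ g, ∑ t ∈ tt, N g t * (ε g t) ^ 2
      ≤ ∑ g, ∑ t ∈ tt, N g t * ((ε g t + ε' g t) / 2) ^ 2 := by
    have H := hfs ((a + a') / 2) (fun g => (cc g + cc' g) / 2) (fun t => (v t + v' t) / 2)
      (fun k => (z k + z' k) / 2)
    have e3 : ∑ g, ∑ t ∈ tt, N g t * (d1 g t - (a + a') / 2 - (cc g + cc' g) / 2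
        - (v t + v' t) / 2 - ∑ k, (z k + z' k) / 2 * dm k g t) ^ 2
        = ∑ g, ∑ t ∈ tt, N g t * ((ε g t + ε' g t) / 2) ^ 2 := by
      refine dcongr _ _ fun g t ht => ?_
      have hz : ∑ k, (z k + z' k) / 2 * dm k g t
          = (∑ k, z k * dm k g t) / 2 + (∑ k, z' k * dm k g t) / 2 := by
        rw [Finset.sum_div, Finset.sum_div, ← Finset.sum_add_distrib]
        exact Finset.sum_congr rfl fun k _ => by ring
      have hε'2 : ε' g t = d1 g t - a' - cc' g - v' t - ∑ k, z' k * dm k g t := by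
        have h2 : ∑ k, z' k * dm' k g t = ∑ k, z' k * dm k g t :=
          Finset.sum_congr rfl fun k _ => by rw [hdatam k g t ht]
        rw [hε', hdata1 g t ht, h2]
      rw [hz, hε, hε'2]; ring
    rw [← hεsq] at H
    rw [e3] at H; exact H
  -- transfer to the product finset and conclude
  have key := aux_residual_unique (Finset.univ ×ˢ tt) (fun p => N p.1 p.2)
    (fun p _ => hN p.1 p.2) (fun p => ε p.1 p.2) (fun p => ε' p.1 p.2) ?_ ?_
  · intro g t ht
    exact key (g, t) (Finset.mem_product.2 ⟨Finset.mem_univ g, ht⟩)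
  · have e4 : ∀ (q : Fin G → ℕ → ℝ), ∑ p ∈ Finset.univ ×ˢ tt, q p.1 p.2
        = ∑ g, ∑ t ∈ tt, q g t := fun q => Finset.sum_product' _ _ q
    rw [e4 (fun g t => N g t * (ε g t) ^ 2),
      e4 (fun g t => N g t * ((ε g t + ε' g t) / 2) ^ 2)]
    exact hmid
  · have e4 : ∀ (q : Fin G → ℕ → ℝ), ∑ p ∈ Finset.univ ×ˢ tt, q p.1 p.2
        = ∑ g, ∑ t ∈ tt, q g t := fun q => Finset.sum_product' _ _ q
    rw [e4 (fun g t => N g t * (ε g t) ^ 2), e4 (fun g t => N g t * (ε' g t) ^ 2)]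
    exact heq

set_option maxHeartbeats 1000000 in
/-- If the family `X` is independent, a bounded function of the whole configuration
is "conditionally uncorrelated" with an integrable function of the `g`-th coordinate,
provided the latter has constant conditional expectation on `g`-configurations. -/
lemma aux_indep_factor {Ω : Type} [MeasurableSpace Ω] (μ : Measure Ω) [IsProbabilityMeasure μ]
    {G : ℕ} {E : Type*} [MeasurableSpace E] (X : Fin G → Ω → E)
    (hXmeas : ∀ g, Measurable (X g))
    (hindep : iIndepFun X μ)
    {C0 : Type*} [Fintype C0] [DecidableEq C0] [MeasurableSpace C0]
    [MeasurableSingletonClass C0]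
    (cfg0 : E → C0) (hcfg0 : Measurable cfg0)
    (g : Fin G) (h : E → ℝ) (hh : Measurable h)
    (hint : Integrable (fun ω => h (X g ω)) μ) (lam : ℝ)
    (hcond : ∀ c0 : C0, ∫ ω, (if cfg0 (X g ω) = c0 then (1:ℝ) else 0) * h (X g ω) ∂μ
      = lam * ∫ ω, (if cfg0 (X g ω) = c0 then (1:ℝ) else 0) ∂μ)
    (Φ : (Fin G → C0) → ℝ) :
    ∫ ω, Φ (fun g' => cfg0 (X g' ω)) * h (X g ω) ∂μ
      = lam * ∫ ω, Φ (fun g' => cfg0 (X g' ω)) ∂μ := by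
  classical
  set cfgF : Ω → (Fin G → C0) := fun ω g' => cfg0 (X g' ω) with hcfgF
  have hcfgmeas : ∀ g', Measurable fun ω => cfg0 (X g' ω) :=
    fun g' => hcfg0.comp (hXmeas g')
  -- per-configuration identity
  have percfg : ∀ c : Fin G → C0,
      (∫ ω, (if cfgF ω = c then (1:ℝ) else 0) * h (X g ω) ∂μ)
        = lam * ∫ ω, (if cfgF ω = c then (1:ℝ) else 0) ∂μ
      ∧ Integrable (fun ω => (if cfgF ω = c then (1:ℝ) else 0) * h (X g ω)) μ
      ∧ Integrable (fun ω => (if cfgF ω = c then (1:ℝ) else 0)) μ := by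
    intro c
    set Te : Finset (Fin G) := Finset.univ.erase g with hTe
    set A : Ω → ℝ := fun ω => if cfg0 (X g ω) = c g then 1 else 0 with hA
    set B : Ω → ℝ := fun ω => if (∀ i : Te, cfg0 (X i ω) = c i) then 1 else 0 with hB
    have hsplit : ∀ ω, (if cfgF ω = c then (1:ℝ) else 0) = A ω * B ω := by
      intro ω
      by_cases hc : cfgF ω = c
      · have h1 : cfg0 (X g ω) = c g := congrFun hc g
        have h2 : ∀ i : Te, cfg0 (X i ω) = c i := fun i => congrFun hc i
        simp only [hA, hB, if_pos hc, if_pos h1, if_pos h2, mul_one]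
      · by_cases h1 : cfg0 (X g ω) = c g
        · have h2 : ¬ (∀ i : Te, cfg0 (X i ω) = c i) := by
            intro hall
            apply hc; funext g'
            by_cases hg' : g' = g
            · rw [hg']; exact h1
            · exact hall ⟨g', Finset.mem_erase.2 ⟨hg', Finset.mem_univ _⟩⟩
          simp only [hA, hB, if_neg hc, if_pos h1, if_neg h2, mul_zero]
        · simp only [hA, hB, if_neg hc, if_neg h1, zero_mul]
    -- independence of the `g`-block and the rest
    have hdisj : Disjoint ({g} : Finset (Fin G)) Te := by
      simp [hTe, Finset.disjoint_left]
    have hIF := hindep.indepFun_finset {g} Te hdisj hXmeas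
    -- compositions
    set φAh : (({g} : Finset (Fin G)) → E) → ℝ :=
      fun v => (if cfg0 (v ⟨g, Finset.mem_singleton_self g⟩) = c g then (1:ℝ) else 0)
        * h (v ⟨g, Finset.mem_singleton_self g⟩) with hφAh
    set φA : (({g} : Finset (Fin G)) → E) → ℝ :=
      fun v => (if cfg0 (v ⟨g, Finset.mem_singleton_self g⟩) = c g then (1:ℝ) else 0) with hφA
    set ψ : (Te → E) → ℝ :=
      fun v => if (∀ i : Te, cfg0 (v i) = c i) then (1:ℝ) else 0 with hψ
    have hsetA : MeasurableSet {v : (({g} : Finset (Fin G)) → E) |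
        cfg0 (v ⟨g, Finset.mem_singleton_self g⟩) = c g} :=
      (hcfg0.comp (measurable_pi_apply _)) (measurableSet_singleton (c g))
    have hφAmeas : Measurable φA := Measurable.ite hsetA measurable_const measurable_const
    have hφAhmeas : Measurable φAh :=
      hφAmeas.mul (hh.comp (measurable_pi_apply _))
    have hsetB : MeasurableSet {v : Te → E | ∀ i : Te, cfg0 (v i) = c i} := by
      have : {v : Te → E | ∀ i : Te, cfg0 (v i) = c i}
          = ⋂ i : Te, {v : Te → E | cfg0 (v i) = c i} := by
        ext v; simp [Set.mem_iInter]
      rw [this]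
      exact MeasurableSet.iInter fun i =>
        (hcfg0.comp (measurable_pi_apply _)) (measurableSet_singleton (c i))
    have hψmeas : Measurable ψ := Measurable.ite hsetB measurable_const measurable_const
    have hIndAhB : IndepFun (fun ω => A ω * h (X g ω)) B μ := hIF.comp hφAhmeas hψmeas
    have hIndAB : IndepFun A B μ := hIF.comp hφAmeas hψmeas
    -- integrability
    have hAmeas : Measurable A :=
      Measurable.ite ((hcfgmeas g) (measurableSet_singleton (c g)))
        measurable_const measurable_const
    have hBmeas : Measurable B := by
      have : B = fun ω => ψ (fun i : Te => X i ω) := rfl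
      rw [this]
      exact hψmeas.comp (measurable_pi_lambda _ fun i => hXmeas i)
    have hAh_int : Integrable (fun ω => A ω * h (X g ω)) μ := by
      refine hint.bdd_mul hAmeas.aestronglyMeasurable (c := 1) (ae_of_all _ fun ω => ?_)
      simp only [hA]
      split_ifs <;> simp
    have hB_int : Integrable B μ := by
      refine (integrable_const (1:ℝ)).mono' hBmeas.aestronglyMeasurable (ae_of_all _ fun ω => ?_)
      simp only [hB]
      split_ifs <;> simp
    have hA_int : Integrable A μ := by
      refine (integrable_const (1:ℝ)).mono' hAmeas.aestronglyMeasurable (ae_of_all _ fun ω => ?_)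
      simp only [hA]
      split_ifs <;> simp
    -- the computation
    have e1 : (fun ω => (if cfgF ω = c then (1:ℝ) else 0) * h (X g ω))
        = fun ω => (A ω * h (X g ω)) * B ω := by
      funext ω; rw [hsplit ω]; ring
    have e2 : (fun ω => (if cfgF ω = c then (1:ℝ) else 0)) = fun ω => A ω * B ω := by
      funext ω; rw [hsplit ω]
    have Hm' : ∫ ω, (A ω * h (X g ω)) * B ω ∂μ
        = (∫ ω, A ω * h (X g ω) ∂μ) * ∫ ω, B ω ∂μ :=
      hIndAhB.integral_mul_eq_mul_integral hAh_int.aestronglyMeasurable hB_int.aestronglyMeasurable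
    have Hm2' : ∫ ω, A ω * B ω ∂μ = (∫ ω, A ω ∂μ) * ∫ ω, B ω ∂μ :=
      hIndAB.integral_mul_eq_mul_integral hA_int.aestronglyMeasurable hB_int.aestronglyMeasurable
    have hcondA : ∫ ω, A ω * h (X g ω) ∂μ = lam * ∫ ω, A ω ∂μ := hcond (c g)
    constructor
    · rw [e1, e2, Hm', Hm2', hcondA]
      ring
    constructor
    · rw [e1]; exact hAh_int.bdd_mul hBmeas.aestronglyMeasurable (c := 1) (ae_of_all _ fun ω => by
        simp only [hB]; split_ifs <;> simp) |>.congr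
        (ae_of_all _ fun ω => by ring)
    · rw [e2]; exact hA_int.bdd_mul hBmeas.aestronglyMeasurable (c := 1) (ae_of_all _ fun ω => by
        simp only [hB]; split_ifs <;> simp) |>.congr
        (ae_of_all _ fun ω => by ring)
  -- expand Φ over all configurations
  have hexp : ∀ v : Fin G → C0, Φ v
      = ∑ c : Fin G → C0, (if v = c then (1:ℝ) else 0) * Φ c := by
    intro v
    have : ∀ c : Fin G → C0, (if v = c then (1:ℝ) else 0) * Φ c
        = if v = c then Φ c else 0 := by
      intro c; by_cases hx : v = c <;> simp [hx]
    rw [Finset.sum_congr rfl fun c _ => this c, Finset.sum_ite_eq]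
    simp
  have int1 : ∀ c : Fin G → C0,
      Integrable (fun ω => (if cfgF ω = c then (1:ℝ) else 0) * Φ c * h (X g ω)) μ := by
    intro c
    exact ((percfg c).2.1.const_mul (Φ c)).congr (ae_of_all _ fun ω => by ring)
  have int2 : ∀ c : Fin G → C0,
      Integrable (fun ω => (if cfgF ω = c then (1:ℝ) else 0) * Φ c) μ :=
    fun c => (percfg c).2.2.mul_const (Φ c)
  calc ∫ ω, Φ (cfgF ω) * h (X g ω) ∂μ
      = ∫ ω, ∑ c : Fin G → C0, (if cfgF ω = c then (1:ℝ) else 0) * Φ c * h (X g ω) ∂μ := by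
        congr 1; funext ω
        rw [hexp (cfgF ω), Finset.sum_mul]
    _ = ∑ c : Fin G → C0, ∫ ω, (if cfgF ω = c then (1:ℝ) else 0) * Φ c * h (X g ω) ∂μ :=
        integral_finset_sum _ fun c _ => int1 c
    _ = ∑ c : Fin G → C0, Φ c
          * (lam * ∫ ω, (if cfgF ω = c then (1:ℝ) else 0) ∂μ) := by
        refine Finset.sum_congr rfl fun c _ => ?_
        have e : ∫ ω, (if cfgF ω = c then (1:ℝ) else 0) * Φ c * h (X g ω) ∂μ
            = ∫ ω, Φ c * ((if cfgF ω = c then (1:ℝ) else 0) * h (X g ω)) ∂μ :=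
          integral_congr_ae (ae_of_all _ fun ω => by ring)
        rw [e, integral_const_mul, (percfg c).1]
    _ = lam * ∑ c : Fin G → C0, ∫ ω, (if cfgF ω = c then (1:ℝ) else 0) * Φ c ∂μ := by
        rw [Finset.mul_sum]
        refine Finset.sum_congr rfl fun c _ => ?_
        rw [integral_mul_const]
        ring
    _ = lam * ∫ ω, ∑ c : Fin G → C0, (if cfgF ω = c then (1:ℝ) else 0) * Φ c ∂μ := by
        rw [integral_finset_sum _ fun c _ => int2 c]
    _ = lam * ∫ ω, Φ (cfgF ω) ∂μ := by
        congr 1; refine integral_congr_ae (ae_of_all _ fun ω => ?_)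
        exact (hexp (cfgF ω)).symm
/-- Decomposition of the TWFE coefficient with several treatments
(Theorem 2). Under balanced panel, sharp design, independent groups, strong
exogeneity and common trends for the never-treated outcome, the expectation of
the coefficient `β̂_fe` on `D¹` in the weighted OLS regression of `Y` on group
fixed effects, time fixed effects, `D¹` and the other treatments equals the
expectation of
`Σ_{(g,t):D¹=1}(N_{g,t}/N₁)w_{g,t}Δ¹_{g,t} + Σ_{(g,t):D^{-1}≠0}(N_{g,t}/N₁)w_{g,t}Δ^{-1}_{g,t}`,
and the weights on the own-treatment effects sum to one. -/
theorem twfe_decomposition_several_treatments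
    (G T K : ℕ) (hT : 1 ≤ T) (hK : 2 ≤ K)
    {Ω : Type} [inst : MeasurableSpace Ω]
    (μ : Measure Ω) [IsProbabilityMeasure μ]
    (po : Fin G → ℕ → Bool → (Fin (K - 1) → Bool) → Ω → ℝ)
    (hpomeas : ∀ g t d dm, Measurable (po g t d dm))
    (hpoint : ∀ g t d dm, Integrable (po g t d dm) μ)
    (D1 : Fin G → ℕ → Ω → Bool)
    (Dm1 : Fin G → ℕ → Ω → Fin (K - 1) → Bool)
    (hD1meas : ∀ g t, Measurable (D1 g t))
    (hDm1meas : ∀ g t, Measurable (Dm1 g t))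
    (Y : Fin G → ℕ → Ω → ℝ)
    (hY : ∀ g t ω, Y g t ω = po g t (D1 g t ω) (Dm1 g t ω) ω)
    (mDg : Fin G → MeasurableSpace Ω)
    (hmDg : ∀ g, mDg g = MeasurableSpace.comap
      (fun ω => fun (t : ℕ) => (D1 g t ω, Dm1 g t ω)) inferInstance)
    -- independent groups
    (hindep : iIndepFun
      (fun (g : Fin G) (ω : Ω) =>
        ((fun (t : ℕ) => (D1 g t ω, Dm1 g t ω)),
         (fun (t : ℕ) (d : Bool) (dm : Fin (K - 1) → Bool) => po g t d dm ω))) μ)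
    -- strong exogeneity of the never-treated outcome
    (hexo : ∀ g t, 2 ≤ t → t ≤ T →
      μ[fun ω => po g t false (fun _ => false) ω -
          po g (t - 1) false (fun _ => false) ω | mDg g]
        =ᵐ[μ] fun _ => ∫ ω, (po g t false (fun _ => false) ω -
          po g (t - 1) false (fun _ => false) ω) ∂μ)
    -- common trends of the never-treated outcome
    (hct : ∀ g g' t, 2 ≤ t → t ≤ T →
      ∫ ω, (po g t false (fun _ => false) ω -
        po g (t - 1) false (fun _ => false) ω) ∂μ =
      ∫ ω, (po g' t false (fun _ => false) ω -
        po g' (t - 1) false (fun _ => false) ω) ∂μ)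
    -- weights (number of observations per cell), balanced panel
    (N : Fin G → ℕ → ℝ) (hN : ∀ g t, 0 < N g t)
    -- real-valued treatments
    (d1R : Fin G → ℕ → Ω → ℝ) (dmR : Fin (K - 1) → Fin G → ℕ → Ω → ℝ)
    (hd1R : ∀ g t ω, d1R g t ω = if D1 g t ω then 1 else 0)
    (hdmR : ∀ k g t ω, dmR k g t ω = if Dm1 g t ω k then 1 else 0)
    -- the TWFE regression: realization-by-realization weighted least squares
    (βhat αhat : Ω → ℝ) (γhat : Ω → Fin G → ℝ) (νhat : Ω → ℕ → ℝ)
    (ζhat : Ω → Fin (K - 1) → ℝ)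
    (hreg : ∀ ω, ∀ (α' β' : ℝ) (γ' : Fin G → ℝ) (ν' : ℕ → ℝ)
        (ζ' : Fin (K - 1) → ℝ),
      ∑ g, ∑ t ∈ Finset.Icc 1 T, N g t * (Y g t ω - αhat ω - γhat ω g - νhat ω t
        - βhat ω * d1R g t ω - ∑ k, ζhat ω k * dmR k g t ω) ^ 2 ≤
      ∑ g, ∑ t ∈ Finset.Icc 1 T, N g t * (Y g t ω - α' - γ' g - ν' t
        - β' * d1R g t ω - ∑ k, ζ' k * dmR k g t ω) ^ 2)
    -- first-stage regression of D¹ on the other regressors, and its residual ε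
    (a0 : Ω → ℝ) (c0 : Ω → Fin G → ℝ) (v0 : Ω → ℕ → ℝ) (z0 : Ω → Fin (K - 1) → ℝ)
    (hfs : ∀ ω, ∀ (a' : ℝ) (c' : Fin G → ℝ) (v' : ℕ → ℝ) (z' : Fin (K - 1) → ℝ),
      ∑ g, ∑ t ∈ Finset.Icc 1 T, N g t * (d1R g t ω - a0 ω - c0 ω g - v0 ω t
        - ∑ k, z0 ω k * dmR k g t ω) ^ 2 ≤
      ∑ g, ∑ t ∈ Finset.Icc 1 T, N g t * (d1R g t ω - a' - c' g - v' t
        - ∑ k, z' k * dmR k g t ω) ^ 2)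
    (ε : Ω → Fin G → ℕ → ℝ)
    (hε : ∀ ω g t, ε ω g t = d1R g t ω - a0 ω - c0 ω g - v0 ω t
      - ∑ k, z0 ω k * dmR k g t ω)
    -- number of treated observations, and the normalization of the weights
    (N1 : Ω → ℝ) (hN1 : ∀ ω, N1 ω = ∑ g, ∑ t ∈ Finset.Icc 1 T, N g t * d1R g t ω)
    (hN1pos : ∀ ω, 0 < N1 ω)
    (εbar : Ω → ℝ)
    (hεbar : ∀ ω, εbar ω =
      ∑ g, ∑ t ∈ Finset.Icc 1 T, N g t / N1 ω * d1R g t ω * ε ω g t)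
    (hεbarne : ∀ ω, εbar ω ≠ 0)  -- no collinearity
    (w : Ω → Fin G → ℕ → ℝ) (hw : ∀ ω g t, w ω g t = ε ω g t / εbar ω)
    -- treatment effects
    (Δ1 Δm : Fin G → ℕ → Ω → ℝ)
    (hΔ1 : ∀ g t ω, Δ1 g t ω =
      po g t true (Dm1 g t ω) ω - po g t false (Dm1 g t ω) ω)
    (hΔm : ∀ g t ω, Δm g t ω =
      po g t false (Dm1 g t ω) ω - po g t false (fun _ => false) ω)
    -- the decomposition's right-hand side
    (RHS : Ω → ℝ)
    (hRHS : ∀ ω, RHS ω = ∑ g, ∑ t ∈ Finset.Icc 1 T,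
      (d1R g t ω * (N g t / N1 ω) * w ω g t * Δ1 g t ω
        + (1 - ∏ k, (1 - dmR k g t ω)) * (N g t / N1 ω) * w ω g t * Δm g t ω))
    (hβint : Integrable βhat μ) (hRHSint : Integrable RHS μ) :
    (∫ ω, βhat ω ∂μ = ∫ ω, RHS ω ∂μ) ∧
    ∀ ω, ∑ g, ∑ t ∈ Finset.Icc 1 T, d1R g t ω * (N g t / N1 ω) * w ω g t = 1 := by
  classical
  -- Notation
  set tt : Finset ℕ := Finset.Icc 1 T with htt
  -- the per-realization regression facts
  have regfacts : ∀ ω : Ω,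
      (∑ g, ∑ t ∈ tt, N g t * ε ω g t * Y g t ω
        = βhat ω * ∑ g, ∑ t ∈ tt, N g t * ε ω g t * d1R g t ω)
      ∧ (∑ g, ∑ t ∈ tt, N g t * ε ω g t * d1R g t ω
        = ∑ g, ∑ t ∈ tt, N g t * ε ω g t * ε ω g t)
      ∧ (∀ g0, ∑ t ∈ tt, N g0 t * ε ω g0 t = 0)
      ∧ (∀ t0 ∈ tt, ∑ g, N g t0 * ε ω g t0 = 0) := by
    intro ω
    exact aux_regression tt N (fun g t => Y g t ω) (fun g t => d1R g t ω)
      (fun k g t => dmR k g t ω) (αhat ω) (βhat ω) (γhat ω) (νhat ω) (ζhat ω)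
      (hreg ω) (a0 ω) (c0 ω) (v0 ω) (z0 ω) (hfs ω)
      (fun g t => ε ω g t) (fun g t => hε ω g t)
      (fun g t => Y g t ω - αhat ω - γhat ω g - νhat ω t - βhat ω * d1R g t ω
        - ∑ k, ζhat ω k * dmR k g t ω) (fun g t => rfl)
  -- E2
  set E2 : Ω → ℝ := fun ω => ∑ g, ∑ t ∈ tt, N g t * ε ω g t * ε ω g t with hE2def
  have hE2 : ∀ ω, E2 ω = N1 ω * εbar ω := by
    intro ω
    have hne : N1 ω ≠ 0 := (hN1pos ω).ne'
    have h1 : N1 ω * εbar ω = ∑ g, ∑ t ∈ tt, N g t * ε ω g t * d1R g t ω := by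
      rw [hεbar ω, Finset.mul_sum]
      refine Finset.sum_congr rfl fun g _ => ?_
      rw [Finset.mul_sum]
      refine Finset.sum_congr rfl fun t _ => ?_
      field_simp
    calc E2 ω = ∑ g, ∑ t ∈ tt, N g t * ε ω g t * d1R g t ω := (regfacts ω).2.1.symm
    _ = N1 ω * εbar ω := h1.symm
  have hE2ne : ∀ ω, E2 ω ≠ 0 := fun ω => by
    rw [hE2 ω]; exact mul_ne_zero (hN1pos ω).ne' (hεbarne ω)
  -- the weights W
  set W : Ω → Fin G → ℕ → ℝ := fun ω g t => N g t * ε ω g t / E2 ω with hWdef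
  have hWt : ∀ ω g, ∑ t ∈ tt, W ω g t = 0 := by
    intro ω g
    rw [show (∑ t ∈ tt, W ω g t) = (∑ t ∈ tt, N g t * ε ω g t) / E2 ω from
      (Finset.sum_div _ _ _).symm, (regfacts ω).2.2.1 g, zero_div]
  have hWg : ∀ ω, ∀ t0 ∈ tt, ∑ g, W ω g t0 = 0 := by
    intro ω t0 ht0
    rw [show (∑ g, W ω g t0) = (∑ g, N g t0 * ε ω g t0) / E2 ω from
      (Finset.sum_div _ _ _).symm, (regfacts ω).2.2.2 t0 ht0, zero_div]
  -- never-treated outcome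
  set Y0 : Fin G → ℕ → Ω → ℝ := fun g t ω => po g t false (fun _ => false) ω with hY0def
  -- pointwise identity : βhat - RHS = ∑∑ W * Y0
  have hβR : ∀ ω, βhat ω - RHS ω = ∑ g, ∑ t ∈ tt, W ω g t * Y0 g t ω := by
    intro ω
    have hne : N1 ω ≠ 0 := (hN1pos ω).ne'
    have hbe : εbar ω ≠ 0 := hεbarne ω
    have hβ : βhat ω * E2 ω = ∑ g, ∑ t ∈ tt, N g t * ε ω g t * Y g t ω := by
      rw [(regfacts ω).1, (regfacts ω).2.1]
    have point : ∀ (g : Fin G) (t : ℕ),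
        (d1R g t ω * (N g t / N1 ω) * w ω g t * Δ1 g t ω
          + (1 - ∏ k, (1 - dmR k g t ω)) * (N g t / N1 ω) * w ω g t * Δm g t ω)
            * (N1 ω * εbar ω)
        = N g t * ε ω g t * (Y g t ω - Y0 g t ω) := by
      intro g t
      have prodΔm : (1 - ∏ k, (1 - dmR k g t ω)) * Δm g t ω = Δm g t ω := by
        by_cases hall : ∀ k, Dm1 g t ω k = false
        · have hDm0 : Dm1 g t ω = fun _ => false := funext hall
          have hz : Δm g t ω = 0 := by rw [hΔm g t ω, hDm0, sub_self]
          rw [hz, mul_zero]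
        · push_neg at hall
          obtain ⟨k0, hk0⟩ := hall
          have hk0' : Dm1 g t ω k0 = true := by
            cases hb : Dm1 g t ω k0
            · exact absurd hb hk0
            · rfl
          have hzero : ∏ k, (1 - dmR k g t ω) = 0 :=
            Finset.prod_eq_zero (Finset.mem_univ k0)
              (by rw [hdmR k0 g t ω, hk0']; norm_num)
          rw [hzero, sub_zero, one_mul]
      rw [hw ω g t]
      have key2 : (1 - ∏ k, (1 - dmR k g t ω)) * (N g t / N1 ω)
            * (ε ω g t / εbar ω) * Δm g t ω
          = (N g t / N1 ω) * (ε ω g t / εbar ω) * Δm g t ω := by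
        calc (1 - ∏ k, (1 - dmR k g t ω)) * (N g t / N1 ω)
              * (ε ω g t / εbar ω) * Δm g t ω
            = ((1 - ∏ k, (1 - dmR k g t ω)) * Δm g t ω)
              * ((N g t / N1 ω) * (ε ω g t / εbar ω)) := by ring
        _ = Δm g t ω * ((N g t / N1 ω) * (ε ω g t / εbar ω)) := by rw [prodΔm]
        _ = (N g t / N1 ω) * (ε ω g t / εbar ω) * Δm g t ω := by ring
      rw [key2]
      cases hD : D1 g t ω
      · have hd0 : d1R g t ω = 0 := by rw [hd1R g t ω, hD]; simp
        have hYe : Y g t ω = Δm g t ω + Y0 g t ω := by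
          rw [hΔm g t ω, hY g t ω, hD, hY0def]; ring
        rw [hd0, hYe]
        field_simp
        try ring
      · have hd1 : d1R g t ω = 1 := by rw [hd1R g t ω, hD]; simp
        have hYe : Y g t ω = Δ1 g t ω + Δm g t ω + Y0 g t ω := by
          rw [hΔ1 g t ω, hΔm g t ω, hY g t ω, hD, hY0def]; ring
        rw [hd1, hYe]
        field_simp
        try ring
    have hRHS2 : RHS ω * E2 ω
        = (∑ g, ∑ t ∈ tt, N g t * ε ω g t * Y g t ω)
          - ∑ g, ∑ t ∈ tt, N g t * ε ω g t * Y0 g t ω := by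
      have e0 : RHS ω * E2 ω = ∑ g, ∑ t ∈ tt,
          N g t * ε ω g t * (Y g t ω - Y0 g t ω) := by
        rw [hRHS ω, hE2 ω, Finset.sum_mul]
        refine Finset.sum_congr rfl fun g _ => ?_
        rw [Finset.sum_mul]
        exact Finset.sum_congr rfl fun t _ => point g t
      rw [e0, ← Finset.sum_sub_distrib]
      refine Finset.sum_congr rfl fun g _ => ?_
      rw [← Finset.sum_sub_distrib]
      exact Finset.sum_congr rfl fun t _ => by ring
    have hmain : (βhat ω - RHS ω) * E2 ω = ∑ g, ∑ t ∈ tt, N g t * ε ω g t * Y0 g t ω := by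
      rw [sub_mul, hβ, hRHS2]; ring
    have := hE2ne ω
    rw [eq_comm, ← div_eq_iff this] at hmain
    rw [← hmain, eq_comm]
    rw [show (∑ g, ∑ t ∈ tt, W ω g t * Y0 g t ω)
        = (∑ g, ∑ t ∈ tt, N g t * ε ω g t * Y0 g t ω) / E2 ω from ?_]
    · rw [Finset.sum_div]
      refine Finset.sum_congr rfl fun g _ => ?_
      rw [Finset.sum_div]
      refine Finset.sum_congr rfl fun t _ => ?_
      rw [hWdef]
      ring
  -- Part B : probabilistic structure
  set X : Fin G → Ω → (ℕ → Bool × (Fin (K - 1) → Bool)) × (ℕ → Bool → (Fin (K - 1) → Bool) → ℝ) :=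
    fun g ω => ((fun t => (D1 g t ω, Dm1 g t ω)), (fun t d dm => po g t d dm ω)) with hXdef
  have hXmeas : ∀ g, Measurable (X g) := by
    intro g
    refine Measurable.prodMk ?_ ?_
    · exact measurable_pi_lambda _ fun t => Measurable.prodMk (hD1meas g t) (hDm1meas g t)
    · exact measurable_pi_lambda _ fun t => measurable_pi_lambda _ fun d =>
        measurable_pi_lambda _ fun dm => hpomeas g t d dm
  set cfg0 : (ℕ → Bool × (Fin (K - 1) → Bool)) × (ℕ → Bool → (Fin (K - 1) → Bool) → ℝ)
      → (Fin T → Bool × (Fin (K - 1) → Bool)) :=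
    fun e i => e.1 ((i : ℕ) + 1) with hcfg0def
  have hcfg0 : Measurable cfg0 :=
    measurable_pi_lambda _ fun i => (measurable_pi_apply _).comp measurable_fst
  set cfgF : Ω → Fin G → (Fin T → Bool × (Fin (K - 1) → Bool)) :=
    fun ω g => cfg0 (X g ω) with hcfgFdef
  have hcfgFmeas : Measurable cfgF :=
    measurable_pi_lambda _ fun g => hcfg0.comp (hXmeas g)
  -- the data is determined by the configuration
  have hdata : ∀ ω ω', cfgF ω' = cfgF ω →
      (∀ g, ∀ t ∈ tt, d1R g t ω' = d1R g t ω)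
      ∧ (∀ k g, ∀ t ∈ tt, dmR k g t ω' = dmR k g t ω) := by
    intro ω ω' hc
    have hD : ∀ g, ∀ t ∈ tt, D1 g t ω' = D1 g t ω ∧ Dm1 g t ω' = Dm1 g t ω := by
      intro g t ht
      rw [htt] at ht; simp only [Finset.mem_Icc] at ht
      have h1 := congrFun (congrFun hc g) (⟨t - 1, by omega⟩ : Fin T)
      have h2 : D1 g (t - 1 + 1) ω' = D1 g (t - 1 + 1) ω := congrArg Prod.fst h1
      have h3 : Dm1 g (t - 1 + 1) ω' = Dm1 g (t - 1 + 1) ω := congrArg Prod.snd h1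
      rw [show t - 1 + 1 = t by omega] at h2 h3
      exact ⟨h2, h3⟩
    constructor
    · intro g t ht
      rw [hd1R g t ω', hd1R g t ω, (hD g t ht).1]
    · intro k g t ht
      rw [hdmR k g t ω', hdmR k g t ω, (hD g t ht).2]
  -- the residual is determined by the configuration
  have hεdet : ∀ ω ω', cfgF ω' = cfgF ω → ∀ g, ∀ t ∈ tt, ε ω' g t = ε ω g t := by
    intro ω ω' hc
    obtain ⟨h1, h2⟩ := hdata ω ω' hc
    exact aux_residual_data_unique tt N hN (fun g t => d1R g t ω') (fun g t => d1R g t ω)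
      (fun k g t => dmR k g t ω') (fun k g t => dmR k g t ω) h1 h2
      (a0 ω') (c0 ω') (v0 ω') (z0 ω') (hfs ω') (a0 ω) (c0 ω) (v0 ω) (z0 ω) (hfs ω)
      (fun g t => ε ω' g t) (fun g t => ε ω g t) (hε ω') (hε ω)
  have hWdet : ∀ ω ω', cfgF ω' = cfgF ω → ∀ g, ∀ t ∈ tt, W ω' g t = W ω g t := by
    intro ω ω' hc g t ht
    have hE2eq : E2 ω' = E2 ω :=
      Finset.sum_congr rfl fun g' _ => Finset.sum_congr rfl fun t' ht' => by
        rw [hεdet ω ω' hc g' t' ht']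
    show N g t * ε ω' g t / E2 ω' = N g t * ε ω g t / E2 ω
    rw [hεdet ω ω' hc g t ht, hE2eq]
  -- weights as a function of the configuration
  set Φ : Fin G → ℕ → (Fin G → (Fin T → Bool × (Fin (K - 1) → Bool))) → ℝ :=
    fun g t c => if hc : ∃ ω, cfgF ω = c then W hc.choose g t else 0 with hΦdef
  have hΦW : ∀ ω g, ∀ t ∈ tt, Φ g t (cfgF ω) = W ω g t := by
    intro ω g t ht
    have hex : ∃ ω', cfgF ω' = cfgF ω := ⟨ω, rfl⟩
    show (if hc : ∃ ω', cfgF ω' = cfgF ω then W hc.choose g t else 0) = W ω g t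
    rw [dif_pos hex]
    exact hWdet ω hex.choose hex.choose_spec g t ht
  have hΦmeas : ∀ g t, Measurable fun ω => Φ g t (cfgF ω) :=
    fun g t => (measurable_of_countable (Φ g t)).comp hcfgFmeas
  have hΦbdd : ∀ g t, ∃ Cb : ℝ, ∀ ω, ‖Φ g t (cfgF ω)‖ ≤ Cb := by
    intro g t
    refine ⟨∑ c : Fin G → (Fin T → Bool × (Fin (K - 1) → Bool)), ‖Φ g t c‖, fun ω => ?_⟩
    exact Finset.single_le_sum (f := fun c => ‖Φ g t c‖) (fun c _ => norm_nonneg _)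
      (Finset.mem_univ _)
  have hΦint : ∀ g t, Integrable (fun ω => Φ g t (cfgF ω)) μ := by
    intro g t
    obtain ⟨Cb, hCb⟩ := hΦbdd g t
    exact (integrable_const Cb).mono' (hΦmeas g t).aestronglyMeasurable (ae_of_all _ hCb)
  -- differenced never-treated outcome
  set δf : Fin G → ℕ → Ω → ℝ := fun g s ω =>
    po g s false (fun _ => false) ω - po g (s - 1) false (fun _ => false) ω with hδdef
  have hδint : ∀ g s, Integrable (δf g s) μ :=
    fun g s => (hpoint g s false _).sub (hpoint g (s - 1) false _)
  have hint_ΦY : ∀ g t s', Integrable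
      (fun ω => Φ g t (cfgF ω) * po g s' false (fun _ => false) ω) μ := by
    intro g t s'
    obtain ⟨Cb, hCb⟩ := hΦbdd g t
    exact (hpoint g s' false _).bdd_mul (hΦmeas g t).aestronglyMeasurable (c := Cb) (ae_of_all _ hCb)
  have hint_Φδ : ∀ g t s, Integrable (fun ω => Φ g t (cfgF ω) * δf g s ω) μ := by
    intro g t s
    obtain ⟨Cb, hCb⟩ := hΦbdd g t
    exact (hδint g s).bdd_mul (hΦmeas g t).aestronglyMeasurable (c := Cb) (ae_of_all _ hCb)
  -- KEY probabilistic step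
  have hKEY : ∀ (g : Fin G) (s : ℕ), 2 ≤ s → s ≤ T → ∀ t : ℕ,
      ∫ ω, Φ g t (cfgF ω) * δf g s ω ∂μ
        = (∫ ω, δf g s ω ∂μ) * ∫ ω, Φ g t (cfgF ω) ∂μ := by
    intro g s hs2 hsT t
    set hE : (ℕ → Bool × (Fin (K - 1) → Bool)) × (ℕ → Bool → (Fin (K - 1) → Bool) → ℝ) → ℝ :=
      fun e => e.2 s false (fun _ => false) - e.2 (s - 1) false (fun _ => false) with hhEdef
    have hhmeas : Measurable hE := by
      refine Measurable.sub ?_ ?_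
      · exact (measurable_pi_apply _).comp ((measurable_pi_apply _).comp
          ((measurable_pi_apply s).comp measurable_snd))
      · exact (measurable_pi_apply _).comp ((measurable_pi_apply _).comp
          ((measurable_pi_apply (s - 1)).comp measurable_snd))
    have hm : mDg g ≤ inst := by
      rw [hmDg g]
      exact Measurable.comap_le (measurable_pi_lambda _ fun t' =>
        Measurable.prodMk (hD1meas g t') (hDm1meas g t'))
    haveI : SigmaFinite (μ.trim hm) := inferInstance
    have hδint' : Integrable (fun ω => hE (X g ω)) μ := hδint g s
    have hcond : ∀ c0 : Fin T → Bool × (Fin (K - 1) → Bool),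
        ∫ ω, (if cfg0 (X g ω) = c0 then (1:ℝ) else 0) * hE (X g ω) ∂μ
          = (∫ ω, δf g s ω ∂μ)
            * ∫ ω, (if cfg0 (X g ω) = c0 then (1:ℝ) else 0) ∂μ := by
      intro c0
      set S : Set Ω := {ω | cfg0 (X g ω) = c0} with hSdef
      have hSm : MeasurableSet[mDg g] S := by
        rw [hmDg g]
        exact ⟨(fun f : ℕ → Bool × (Fin (K - 1) → Bool) =>
            (fun i : Fin T => f ((i : ℕ) + 1))) ⁻¹' {c0},
          (measurable_pi_lambda _ fun i => measurable_pi_apply _)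
            (measurableSet_singleton c0), rfl⟩
      have hSamb : MeasurableSet S := hm S hSm
      have hind : (fun ω => (if cfg0 (X g ω) = c0 then (1:ℝ) else 0) * hE (X g ω))
          = S.indicator (fun ω => δf g s ω) := by
        funext ω
        by_cases hωS : ω ∈ S
        · rw [Set.indicator_of_mem hωS, if_pos (show cfg0 (X g ω) = c0 from hωS), one_mul]
        · rw [Set.indicator_of_notMem hωS,
            if_neg (show ¬cfg0 (X g ω) = c0 from hωS), zero_mul]
      have hind1 : (fun ω => (if cfg0 (X g ω) = c0 then (1:ℝ) else 0))
          = S.indicator (fun _ => (1:ℝ)) := by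
        funext ω
        by_cases hωS : ω ∈ S
        · rw [Set.indicator_of_mem hωS, if_pos (show cfg0 (X g ω) = c0 from hωS)]
        · rw [Set.indicator_of_notMem hωS,
            if_neg (show ¬cfg0 (X g ω) = c0 from hωS)]
      rw [hind, hind1, integral_indicator hSamb, integral_indicator hSamb]
      have hce := hexo g s hs2 hsT
      have h1 : ∫ ω in S, δf g s ω ∂μ
          = ∫ ω in S, (μ[fun ω' => po g s false (fun _ => false) ω'
              - po g (s - 1) false (fun _ => false) ω' | mDg g]) ω ∂μ :=
        (setIntegral_condExp hm (hδint g s) hSm).symm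
      have h2 : ∫ ω in S, (μ[fun ω' => po g s false (fun _ => false) ω'
              - po g (s - 1) false (fun _ => false) ω' | mDg g]) ω ∂μ
          = ∫ _ω in S, (∫ ω', (po g s false (fun _ => false) ω'
              - po g (s - 1) false (fun _ => false) ω') ∂μ) ∂μ :=
        setIntegral_congr_ae hSamb (hce.mono fun ω hω _ => hω)
      rw [h1, h2, setIntegral_const, setIntegral_const]
      simp only [smul_eq_mul, mul_one]
      ring
    have := aux_indep_factor μ X hXmeas hindep cfg0 hcfg0 g hE hhmeas hδint'
      (∫ ω, δf g s ω ∂μ) hcond (Φ g t)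
    exact this
  -- conclusion (1)
  have goal1 : ∫ ω, βhat ω ∂μ = ∫ ω, RHS ω ∂μ := by
    have hz : ∫ ω, (βhat ω - RHS ω) ∂μ = 0 := by
      have e1 : ∫ ω, (βhat ω - RHS ω) ∂μ
          = ∫ ω, ∑ g, ∑ t ∈ tt, Φ g t (cfgF ω) * Y0 g t ω ∂μ := by
        refine integral_congr_ae (ae_of_all _ fun ω => ?_)
        show βhat ω - RHS ω = ∑ g, ∑ t ∈ tt, Φ g t (cfgF ω) * Y0 g t ω
        rw [hβR ω]
        refine Finset.sum_congr rfl fun g _ => Finset.sum_congr rfl fun t ht => ?_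
        rw [hΦW ω g t ht]
      have hint_term : ∀ (g : Fin G), ∀ t ∈ tt,
          Integrable (fun ω => Φ g t (cfgF ω) * Y0 g t ω) μ :=
        fun g t _ => hint_ΦY g t t
      rw [e1, integral_finset_sum _ fun g _ =>
        integrable_finset_sum _ fun t ht => hint_term g t ht]
      have e2 : ∀ g : Fin G, ∫ ω, ∑ t ∈ tt, Φ g t (cfgF ω) * Y0 g t ω ∂μ
          = ∑ t ∈ tt, ∫ ω, Φ g t (cfgF ω) * Y0 g t ω ∂μ :=
        fun g => integral_finset_sum _ fun t ht => hint_term g t ht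
      rw [Finset.sum_congr rfl fun g _ => e2 g]
      have e3 : ∀ g : Fin G, ∀ t ∈ tt, ∫ ω, Φ g t (cfgF ω) * Y0 g t ω ∂μ
          = (∫ ω, Φ g t (cfgF ω) * Y0 g 1 ω ∂μ)
            + ∑ s ∈ Finset.Icc 2 t,
                (∫ ω, δf g s ω ∂μ) * ∫ ω, Φ g t (cfgF ω) ∂μ := by
        intro g t ht
        rw [htt] at ht; simp only [Finset.mem_Icc] at ht
        have etel : (fun ω => Φ g t (cfgF ω) * Y0 g t ω)
            = fun ω => Φ g t (cfgF ω) * Y0 g 1 ω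
              + ∑ s ∈ Finset.Icc 2 t, Φ g t (cfgF ω) * δf g s ω := by
          funext ω
          rw [show Y0 g t ω = Y0 g 1 ω + ∑ s ∈ Finset.Icc 2 t, δf g s ω from
            aux_telescope (fun n => po g n false (fun _ => false) ω) t ht.1,
            mul_add, Finset.mul_sum]
        rw [etel, integral_add (hint_ΦY g t 1)
          (integrable_finset_sum _ fun s _ => hint_Φδ g t s),
          integral_finset_sum _ fun s _ => hint_Φδ g t s]
        congr 1
        refine Finset.sum_congr rfl fun s hs => ?_
        simp only [Finset.mem_Icc] at hs
        exact hKEY g s hs.1 (le_trans hs.2 ht.2) t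
      rw [Finset.sum_congr rfl fun g _ => Finset.sum_congr rfl fun t ht => e3 g t ht]
      simp only [Finset.sum_add_distrib]
      have part1 : ∀ g : Fin G, ∑ t ∈ tt, ∫ ω, Φ g t (cfgF ω) * Y0 g 1 ω ∂μ = 0 := by
        intro g
        rw [← integral_finset_sum _ fun t _ => hint_ΦY g t 1]
        rw [show (fun ω => ∑ t ∈ tt, Φ g t (cfgF ω) * Y0 g 1 ω) = fun _ => (0:ℝ) from ?_,
          integral_zero]
        funext ω
        rw [← Finset.sum_mul,
          show (∑ t ∈ tt, Φ g t (cfgF ω)) = 0 from ?_, zero_mul]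
        rw [Finset.sum_congr rfl fun t ht => hΦW ω g t ht]
        exact hWt ω g
      have part2 : ∑ g, ∑ t ∈ tt, ∑ s ∈ Finset.Icc 2 t,
          (∫ ω, δf g s ω ∂μ) * ∫ ω, Φ g t (cfgF ω) ∂μ = 0 := by
        have eswap : ∀ g : Fin G, ∑ t ∈ tt, ∑ s ∈ Finset.Icc 2 t,
            (∫ ω, δf g s ω ∂μ) * ∫ ω, Φ g t (cfgF ω) ∂μ
            = ∑ s ∈ Finset.Icc 2 T, ∑ t' ∈ Finset.Icc s T,
                (∫ ω, δf g s ω ∂μ) * ∫ ω, Φ g t' (cfgF ω) ∂μ := by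
          intro g; rw [htt]
          exact aux_sum_swap T
            (fun s t' => (∫ ω, δf g s ω ∂μ) * ∫ ω, Φ g t' (cfgF ω) ∂μ)
        rw [Finset.sum_congr rfl fun g _ => eswap g, Finset.sum_comm]
        refine Finset.sum_eq_zero fun s hs => ?_
        simp only [Finset.mem_Icc] at hs
        rcases Nat.eq_zero_or_pos G with hG | hG
        · haveI : IsEmpty (Fin G) := ⟨fun i => absurd i.2 (by omega)⟩
          rw [Finset.univ_eq_empty, Finset.sum_empty]
        · set g0 : Fin G := ⟨0, hG⟩ with hg0
          have step1 : ∀ g : Fin G, ∑ t' ∈ Finset.Icc s T,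
              (∫ ω, δf g s ω ∂μ) * ∫ ω, Φ g t' (cfgF ω) ∂μ
              = (∫ ω, δf g0 s ω ∂μ) * ∑ t' ∈ Finset.Icc s T, ∫ ω, Φ g t' (cfgF ω) ∂μ := by
            intro g
            rw [← Finset.mul_sum, hct g g0 s hs.1 hs.2]
          rw [Finset.sum_congr rfl fun g _ => step1 g, ← Finset.mul_sum]
          have inner : ∑ g : Fin G, ∑ t' ∈ Finset.Icc s T, ∫ ω, Φ g t' (cfgF ω) ∂μ = 0 := by
            have := integral_finset_sum (μ := μ) (Finset.univ : Finset (Fin G))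
              (f := fun g ω => ∑ t' ∈ Finset.Icc s T, Φ g t' (cfgF ω))
              (fun g _ => integrable_finset_sum _ fun t' _ => hΦint g t')
            rw [← Finset.sum_congr rfl fun g (_ : g ∈ Finset.univ) =>
              integral_finset_sum (Finset.Icc s T) (fun t' _ => hΦint g t'), ← this]
            rw [show (fun ω => ∑ g : Fin G, ∑ t' ∈ Finset.Icc s T, Φ g t' (cfgF ω))
                = fun _ => (0:ℝ) from ?_, integral_zero]
            funext ω
            rw [Finset.sum_comm]
            refine Finset.sum_eq_zero fun t' ht' => ?_
            simp only [Finset.mem_Icc] at ht'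
            have htt' : t' ∈ tt := by rw [htt]; simp only [Finset.mem_Icc]; omega
            rw [Finset.sum_congr rfl fun g _ => hΦW ω g t' htt']
            exact hWg ω t' htt'
          rw [inner, mul_zero]
      rw [Finset.sum_congr rfl fun g _ => part1 g, Finset.sum_const_zero, part2, add_zero]
    have hs' := integral_sub hβint hRHSint
    rw [hz] at hs'
    linarith
  -- conclusion (2)
  refine ⟨goal1, fun ω => ?_⟩
  have hbe := hεbarne ω
  have e1 : ∀ (g : Fin G) (t : ℕ), d1R g t ω * (N g t / N1 ω) * w ω g t
      = (N g t / N1 ω * d1R g t ω * ε ω g t) / εbar ω := by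
    intro g t; rw [hw ω g t]; ring
  rw [aux_dcongr tt _ _ e1]
  rw [show (∑ g, ∑ t ∈ tt, (N g t / N1 ω * d1R g t ω * ε ω g t) / εbar ω)
      = (∑ g, ∑ t ∈ tt, N g t / N1 ω * d1R g t ω * ε ω g t) / εbar ω from ?_,
    ← hεbar ω, div_self hbe]
  rw [Finset.sum_div]
  exact Finset.sum_congr rfl fun g _ => by rw [Finset.sum_div]
end

section
/- In the setting of the K-treatment TWFE decomposition theorem, if K = 2, then Σ_{(g,t): D^2_{g,t}=1} (N_{g,t}/N_1) w_{g,t} = 0, i.e., the contamination weights on the effect of the second treatment sum to zero. -/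
open Finset

/-- With `K = 2` treatments, the contamination weights attached to
the effect of the second treatment in the TWFE decomposition sum to zero:
`Σ_{(g,t):D²_{g,t}=1} (N_{g,t}/N₁) w_{g,t} = 0`, where `w` is the normalized
residual of the weighted regression of `D¹` on group dummies, time dummies and
`D²`. -/
theorem contamination_weights_sum_to_zero_K2
    (G T : ℕ) (N : Fin G → ℕ → ℝ) (hN : ∀ g t, 0 < N g t)
    (D1 D2 : Fin G → ℕ → Bool)
    (d1R d2R : Fin G → ℕ → ℝ)
    (hd1R : ∀ g t, d1R g t = if D1 g t then 1 else 0)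
    (hd2R : ∀ g t, d2R g t = if D2 g t then 1 else 0)
    (α ζ : ℝ) (γ : Fin G → ℝ) (ν : ℕ → ℝ)
    (hmin : ∀ (α' ζ' : ℝ) (γ' : Fin G → ℝ) (ν' : ℕ → ℝ),
      ∑ g, ∑ t ∈ Finset.Icc 1 T,
        N g t * (d1R g t - α - γ g - ν t - ζ * d2R g t) ^ 2 ≤
      ∑ g, ∑ t ∈ Finset.Icc 1 T,
        N g t * (d1R g t - α' - γ' g - ν' t - ζ' * d2R g t) ^ 2)
    (ε : Fin G → ℕ → ℝ)
    (hε : ∀ g t, ε g t = d1R g t - α - γ g - ν t - ζ * d2R g t)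
    (N1 : ℝ) (hN1 : N1 = ∑ g, ∑ t ∈ Finset.Icc 1 T, N g t * d1R g t)
    (hN1pos : 0 < N1)
    (εbar : ℝ)
    (hεbar : εbar = ∑ g, ∑ t ∈ Finset.Icc 1 T, N g t / N1 * d1R g t * ε g t)
    (hεbarne : εbar ≠ 0)
    (w : Fin G → ℕ → ℝ) (hw : ∀ g t, w g t = ε g t / εbar) :
    ∑ g, ∑ t ∈ Finset.Icc 1 T, d2R g t * (N g t / N1) * w g t = 0 := by
  set S := ∑ g, ∑ t ∈ Finset.Icc 1 T, N g t * d2R g t * ε g t with hSdef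
  set Q := ∑ g, ∑ t ∈ Finset.Icc 1 T, N g t * d2R g t ^ 2 with hQdef
  have hQ0 : 0 ≤ Q := by
    apply Finset.sum_nonneg; intro g _
    apply Finset.sum_nonneg; intro t _
    exact mul_nonneg (hN g t).le (sq_nonneg _)
  have key : ∀ x : ℝ, 0 ≤ Q * x ^ 2 - 2 * x * S := by
    intro x
    have h := hmin α (ζ + x) γ ν
    have expand : ∀ g : Fin G, ∀ t : ℕ,
        N g t * (d1R g t - α - γ g - ν t - (ζ + x) * d2R g t) ^ 2
        = N g t * ε g t ^ 2 - 2 * x * (N g t * d2R g t * ε g t)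
          + x ^ 2 * (N g t * d2R g t ^ 2) := by
      intro g t; rw [hε]; ring
    have hL : ∑ g, ∑ t ∈ Finset.Icc 1 T,
        N g t * (d1R g t - α - γ g - ν t - ζ * d2R g t) ^ 2
        = ∑ g, ∑ t ∈ Finset.Icc 1 T, N g t * ε g t ^ 2 := by
      refine Finset.sum_congr rfl fun g _ => Finset.sum_congr rfl fun t _ => ?_
      rw [hε]
    have hR : ∑ g, ∑ t ∈ Finset.Icc 1 T,
        N g t * (d1R g t - α - γ g - ν t - (ζ + x) * d2R g t) ^ 2
        = (∑ g, ∑ t ∈ Finset.Icc 1 T, N g t * ε g t ^ 2)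
          - 2 * x * (∑ g, ∑ t ∈ Finset.Icc 1 T, N g t * d2R g t * ε g t)
          + x ^ 2 * (∑ g, ∑ t ∈ Finset.Icc 1 T, N g t * d2R g t ^ 2) := by
      simp_rw [expand, Finset.sum_add_distrib, Finset.sum_sub_distrib,
        ← Finset.mul_sum]
    rw [hL, hR, ← hSdef, ← hQdef] at h
    linarith
  have hS : S = 0 := by
    have h := key (S / (Q + 1))
    have hq1 : (0:ℝ) < Q + 1 := by linarith
    have hq1' : (Q + 1) ≠ 0 := ne_of_gt hq1
    field_simp at h
    have hden : (0:ℝ) < (Q + 1) ^ 2 * (Q + 1) := by positivity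
    have h2 : 0 ≤ S ^ 2 * (Q - (Q + 1) * 2) := by linarith
    have hS2 : S ^ 2 ≤ 0 := by nlinarith [hQ0, sq_nonneg S]
    exact sq_eq_zero_iff.mp (le_antisymm hS2 (sq_nonneg S))
  have hterm : ∀ g : Fin G, ∀ t : ℕ,
      d2R g t * (N g t / N1) * w g t
      = (N g t * d2R g t * ε g t) * (N1⁻¹ * εbar⁻¹) := by
    intro g t; rw [hw, div_eq_mul_inv, div_eq_mul_inv]; ring
  simp_rw [hterm, ← Finset.sum_mul, hSdef.symm ▸ hS]
  exact zero_mul _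
end

section
/- In the K-treatment TWFE decomposition, if the treatments D^2,...,D^K are mutually exclusive (at most one equals 1 in each cell), then Σ_{(g,t): D^{-1}_{g,t} ≠ 𝟎} (N_{g,t}/N_1) w_{g,t} = 0. -/
open Finset

/-- In the K-treatment TWFE decomposition, if the other treatments
`D²,...,D^K` are mutually exclusive (at most one equals one in each cell), then
the contamination weights sum to zero:
`Σ_{(g,t): D^{-1}_{g,t} ≠ 0} (N_{g,t}/N₁) w_{g,t} = 0`. The indicator
`1{D^{-1}_{g,t} ≠ 0}` is written `1 − Π_k (1 − D^k_{g,t})`. -/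
theorem contamination_weights_sum_to_zero_mutually_exclusive
    (G T Km1 : ℕ) (N : Fin G → ℕ → ℝ) (hN : ∀ g t, 0 < N g t)
    (D1 : Fin G → ℕ → Bool) (Dk : Fin Km1 → Fin G → ℕ → Bool)
    (hexcl : ∀ g t (k k' : Fin Km1), Dk k g t = true → Dk k' g t = true → k = k')
    (d1R : Fin G → ℕ → ℝ) (dkR : Fin Km1 → Fin G → ℕ → ℝ)
    (hd1R : ∀ g t, d1R g t = if D1 g t then 1 else 0)
    (hdkR : ∀ k g t, dkR k g t = if Dk k g t then 1 else 0)
    (α : ℝ) (γ : Fin G → ℝ) (ν : ℕ → ℝ) (ζ : Fin Km1 → ℝ)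
    (hmin : ∀ (α' : ℝ) (γ' : Fin G → ℝ) (ν' : ℕ → ℝ) (ζ' : Fin Km1 → ℝ),
      ∑ g, ∑ t ∈ Finset.Icc 1 T,
        N g t * (d1R g t - α - γ g - ν t - ∑ k, ζ k * dkR k g t) ^ 2 ≤
      ∑ g, ∑ t ∈ Finset.Icc 1 T,
        N g t * (d1R g t - α' - γ' g - ν' t - ∑ k, ζ' k * dkR k g t) ^ 2)
    (ε : Fin G → ℕ → ℝ)
    (hε : ∀ g t, ε g t = d1R g t - α - γ g - ν t - ∑ k, ζ k * dkR k g t)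
    (N1 : ℝ) (hN1 : N1 = ∑ g, ∑ t ∈ Finset.Icc 1 T, N g t * d1R g t)
    (hN1pos : 0 < N1)
    (εbar : ℝ)
    (hεbar : εbar = ∑ g, ∑ t ∈ Finset.Icc 1 T, N g t / N1 * d1R g t * ε g t)
    (hεbarne : εbar ≠ 0)
    (w : Fin G → ℕ → ℝ) (hw : ∀ g t, w g t = ε g t / εbar) :
    ∑ g, ∑ t ∈ Finset.Icc 1 T,
      (1 - ∏ k, (1 - dkR k g t)) * (N g t / N1) * w g t = 0 := by
 -- First-order condition: residual orthogonal to each dkR k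
  have hS : ∀ k : Fin Km1,
      (∑ g, ∑ t ∈ Finset.Icc 1 T, N g t * ε g t * dkR k g t) = 0 := by
    intro k
    set S := ∑ g, ∑ t ∈ Finset.Icc 1 T, N g t * ε g t * dkR k g t with hSdef
    set Q := ∑ g, ∑ t ∈ Finset.Icc 1 T, N g t * (dkR k g t) ^ 2 with hQdef
    have hQ0 : 0 ≤ Q := by
      apply Finset.sum_nonneg; intro g _
      apply Finset.sum_nonneg; intro t _
      have := (hN g t).le
      positivity
    have key : ∀ s : ℝ, 0 ≤ -(2 * s * S) + s ^ 2 * Q := by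
      intro s
      have h := hmin α γ ν (fun j => ζ j + if j = k then s else 0)
      have hL : (∑ g, ∑ t ∈ Finset.Icc 1 T,
          N g t * (d1R g t - α - γ g - ν t - ∑ j, ζ j * dkR j g t) ^ 2)
          = ∑ g, ∑ t ∈ Finset.Icc 1 T, N g t * (ε g t) ^ 2 := by
        refine Finset.sum_congr rfl fun g _ => Finset.sum_congr rfl fun t _ => ?_
        rw [hε]
      have hR : (∑ g, ∑ t ∈ Finset.Icc 1 T,
          N g t * (d1R g t - α - γ g - ν t -
            ∑ j, (ζ j + if j = k then s else 0) * dkR j g t) ^ 2)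
          = (∑ g, ∑ t ∈ Finset.Icc 1 T, N g t * (ε g t) ^ 2)
            + ((-(2 * s * S)) + s ^ 2 * Q) := by
        rw [hSdef, hQdef]
        rw [Finset.mul_sum, Finset.mul_sum, ← Finset.sum_neg_distrib,
          ← Finset.sum_add_distrib, ← Finset.sum_add_distrib]
        refine Finset.sum_congr rfl fun g _ => ?_
        rw [Finset.mul_sum, Finset.mul_sum, ← Finset.sum_neg_distrib,
          ← Finset.sum_add_distrib, ← Finset.sum_add_distrib]
        refine Finset.sum_congr rfl fun t _ => ?_
        have hsum : (∑ j, (ζ j + if j = k then s else 0) * dkR j g t)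
            = (∑ j, ζ j * dkR j g t) + s * dkR k g t := by
          rw [Finset.sum_congr rfl (fun j _ => add_mul (ζ j) _ (dkR j g t)),
            Finset.sum_add_distrib]
          congr 1
          rw [Finset.sum_congr rfl (fun j _ => ite_mul (j = k) s 0 (dkR j g t))]
          simp [Finset.sum_ite_eq' Finset.univ k]
        rw [hsum, hε]
        ring
      rw [hL, hR] at h
      linarith
    have hSzero : S = 0 := by
      have hQ1 : (0:ℝ) < Q + 1 := by linarith
      have hs : S / (Q + 1) * (Q + 1) = S := div_mul_cancel₀ S (ne_of_gt hQ1)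
      have h1 := key (S / (Q + 1))
      set s := S / (Q + 1) with hsdef
      rw [← hs] at h1
      have hs0 : s = 0 := by nlinarith [sq_nonneg s]
      rw [← hs, hs0, zero_mul]
    exact hSzero
  -- indicator identity using mutual exclusivity
  have hind : ∀ g t, (1 - ∏ k, (1 - dkR k g t)) = ∑ k, dkR k g t := by
    intro g t
    by_cases h : ∃ k0, Dk k0 g t = true
    · obtain ⟨k0, hk0⟩ := h
      have hprod : (∏ k, (1 - dkR k g t)) = 0 := by
        apply Finset.prod_eq_zero (Finset.mem_univ k0)
        rw [hdkR]; simp [hk0]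
      have hsum : (∑ k, dkR k g t) = 1 := by
        have : ∀ k ∈ Finset.univ, dkR k g t = if k = k0 then (1:ℝ) else 0 := by
          intro j _
          rw [hdkR]
          by_cases hj : Dk j g t = true
          · have := hexcl g t j k0 hj hk0
            simp [hj, this, hk0]
          · have hjn : j ≠ k0 := fun e => hj (e ▸ hk0)
            simp [hj, hjn]
        rw [Finset.sum_congr rfl this]
        simp [Finset.sum_ite_eq' Finset.univ k0]
      rw [hprod, hsum]; ring
    · push_neg at h
      have : ∀ k ∈ Finset.univ, dkR k g t = (0:ℝ) := by
        intro j _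
        rw [hdkR]
        simp [h j]
      have hprod : (∏ k, (1 - dkR k g t)) = 1 := by
        apply Finset.prod_eq_one; intro j _; rw [this j (Finset.mem_univ j)]; ring
      rw [hprod, Finset.sum_congr rfl this]
      simp
  -- conclude
  have hN1ne : N1 ≠ 0 := ne_of_gt hN1pos
  have step : ∀ g t, (1 - ∏ k, (1 - dkR k g t)) * (N g t / N1) * w g t
      = ∑ k, N g t * ε g t * dkR k g t * (1 / (N1 * εbar)) := by
    intro g t
    rw [hind, hw, Finset.sum_mul, Finset.sum_mul]
    refine Finset.sum_congr rfl fun j _ => ?_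
    field_simp
  calc ∑ g, ∑ t ∈ Finset.Icc 1 T,
        (1 - ∏ k, (1 - dkR k g t)) * (N g t / N1) * w g t
      = ∑ g, ∑ t ∈ Finset.Icc 1 T, ∑ k, N g t * ε g t * dkR k g t * (1 / (N1 * εbar)) := by
        exact Finset.sum_congr rfl fun g _ => Finset.sum_congr rfl fun t _ => step g t
    _ = ∑ k : Fin Km1, ∑ g, ∑ t ∈ Finset.Icc 1 T, N g t * ε g t * dkR k g t * (1 / (N1 * εbar)) := by
        exact Eq.trans (Finset.sum_congr rfl fun g _ => Finset.sum_comm) Finset.sum_comm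
    _ = ∑ k : Fin Km1, (∑ g, ∑ t ∈ Finset.Icc 1 T, N g t * ε g t * dkR k g t) * (1 / (N1 * εbar)) := by
        refine Finset.sum_congr rfl fun k _ => ?_
        rw [Finset.sum_mul]
        exact Finset.sum_congr rfl fun g _ => (Finset.sum_mul _ _ _).symm
    _ = 0 := by simp [hS]
end
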